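/- arXiv:1603.01555 — 7 statements merged into one kernel-verified Lean document; each statement's English description precedes it below -/
import Mathlib

section
/- A = ℚ[x₁,…,x_k,ξ] is, via ψ, a free S-module of rank k+1 with basis 1, ξ, …, ξᵏ; that is, the S-module map S^{k+1} → A sending (f₀,…,f_k) to ∑_{j=0}^{k} ψ(f_j)·ξʲ is bijective. In particular ψ is injective. (This is the statement that the superbimodule Ω_{k+1,k} is free of graded rank [k+1] as a left Ω_{k+1}-supermodule, read at the level of the underlying cohomology rings.) -/
open Polynomial

noncomputable section

/-- `B k = ℚ[x₁,…,x_k]`. -/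
abbrev Bk (k : ℕ) : Type := MvPolynomial (Fin k) ℚ

/-- `A k = ℚ[x₁,…,x_k,ξ]`, the cohomology ring of the infinite partial flag variety
`G_{k,k+1}`; the variable `ξ` is `Polynomial.X`. -/
abbrev Ak (k : ℕ) : Type := Polynomial (Bk k)

/-- The Chern classes, with conventions `x 0 = 1` and `x j = 0` for `j < 0` or `j > k`. -/
noncomputable def xB (k : ℕ) (j : ℤ) : Bk k :=
  if j = 0 then 1
  else if h : 0 < j ∧ j ≤ (k : ℤ) then MvPolynomial.X ⟨(j - 1).toNat, by omega⟩ else 0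

noncomputable def xA (k : ℕ) (j : ℤ) : Ak k := Polynomial.C (xB k j)

/-- The ring homomorphism `ψ : S = ℚ[y₁,…,y_{k+1}] → A` with `ψ(y_j) = x_j + ξ·x_{j−1}`. -/
noncomputable def psi (k : ℕ) : MvPolynomial (Fin (k + 1)) ℚ →+* Ak k :=
  (MvPolynomial.aeval fun j : Fin (k + 1) =>
    xA k ((j : ℤ) + 1) + Polynomial.X * xA k (j : ℤ)).toRingHom

namespace S1

lemma xB_zero (k : ℕ) : xB k 0 = 1 := by simp [xB]

lemma xB_succ (k : ℕ) (n : ℕ) (h : n < k) :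
    xB k ((n : ℤ) + 1) = MvPolynomial.X ⟨n, h⟩ := by
  rw [xB, if_neg (by omega), dif_pos (by omega)]
  congr 1
  apply Fin.ext
  simp

lemma xB_gt (k : ℕ) (j : ℤ) (h : (k : ℤ) < j) : xB k j = 0 := by
  rw [xB, if_neg (by omega), dif_neg (by omega)]

/-- `z k i = ∑_{t=0}^{i} (-1)^t x_{i-t} ξ^t`, so that `z k i = Θ'(x_i)`. -/
noncomputable def z (k i : ℕ) : Ak k :=
  ∑ t ∈ Finset.range (i + 1),
    Polynomial.C ((-1 : Bk k) ^ t * xB k ((i : ℤ) - (t : ℤ))) * Polynomial.X ^ t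

lemma z_zero (k : ℕ) : z k 0 = 1 := by
  simp [z, xB_zero]

lemma z_rec (k i : ℕ) :
    z k (i + 1) + Polynomial.X * z k i = Polynomial.C (xB k ((i : ℤ) + 1)) := by
  have hXz : Polynomial.X * z k i = ∑ t ∈ Finset.range (i + 1),
      (Polynomial.C ((-1 : Bk k) ^ t * xB k ((i : ℤ) - (t : ℤ))) * Polynomial.X ^ (t + 1)) := by
    rw [z, Finset.mul_sum]
    refine Finset.sum_congr rfl fun t _ => ?_
    ring
  have hz : z k (i + 1) = (∑ t ∈ Finset.range (i + 1),
      Polynomial.C ((-1 : Bk k) ^ (t + 1) * xB k (((i + 1 : ℕ) : ℤ) - ((t + 1 : ℕ) : ℤ)))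
        * Polynomial.X ^ (t + 1)) + Polynomial.C ((-1 : Bk k) ^ 0
        * xB k (((i + 1 : ℕ) : ℤ) - ((0 : ℕ) : ℤ))) * Polynomial.X ^ 0 := by
    rw [z, Finset.sum_range_succ']
  rw [hz, hXz]
  have hterm : ∀ t ∈ Finset.range (i + 1),
      Polynomial.C ((-1 : Bk k) ^ (t + 1) * xB k (((i + 1 : ℕ) : ℤ) - ((t + 1 : ℕ) : ℤ)))
        * Polynomial.X ^ (t + 1)
      = -(Polynomial.C ((-1 : Bk k) ^ t * xB k ((i : ℤ) - (t : ℤ))) * Polynomial.X ^ (t + 1)) := by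
    intro t _
    have h1 : ((i + 1 : ℕ) : ℤ) - ((t + 1 : ℕ) : ℤ) = (i : ℤ) - (t : ℤ) := by push_cast; ring
    rw [h1, pow_succ]
    simp [map_mul, map_neg]
    ring
  rw [Finset.sum_congr rfl hterm, Finset.sum_neg_distrib]
  have h2 : (((i + 1 : ℕ) : ℤ) - ((0 : ℕ) : ℤ)) = (i : ℤ) + 1 := by push_cast; ring
  rw [h2]
  simp only [pow_zero, one_mul, mul_one]
  abel


/-- `ψ` as an `ℚ`-algebra hom. -/
noncomputable def psiA (k : ℕ) : MvPolynomial (Fin (k + 1)) ℚ →ₐ[ℚ] Ak k :=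
  MvPolynomial.aeval fun j : Fin (k + 1) =>
    xA k ((j : ℤ) + 1) + Polynomial.X * xA k (j : ℤ)

lemma psi_eq (k : ℕ) (s : MvPolynomial (Fin (k + 1)) ℚ) : psi k s = psiA k s := rfl

lemma psiA_X (k : ℕ) (j : Fin (k + 1)) :
    psiA k (MvPolynomial.X j) =
      Polynomial.C (xB k ((j : ℤ) + 1)) + Polynomial.X * Polynomial.C (xB k (j : ℤ)) := by
  simp [psiA, xA]

/-- The inverse change of variables `B → A`, `x_j ↦ z_j`. -/
noncomputable def zAlg (k : ℕ) : Bk k →ₐ[ℚ] Ak k :=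
  MvPolynomial.aeval fun j : Fin k => z k ((j : ℕ) + 1)

lemma zAlg_xB (k : ℕ) (i : ℕ) (h : i ≤ k) : zAlg k (xB k (i : ℤ)) = z k i := by
  cases i with
  | zero => simp [xB_zero, z_zero]
  | succ n =>
    have hn : n < k := by omega
    have : ((n + 1 : ℕ) : ℤ) = (n : ℤ) + 1 := by push_cast; ring
    rw [this, xB_succ k n hn, zAlg, MvPolynomial.aeval_X]

/-- `τ = Θ' : A → A`, the inverse change of variables. -/
noncomputable def tau (k : ℕ) : Ak k →ₐ[ℚ] Ak k :=
  Polynomial.aevalTower (zAlg k) Polynomial.X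

noncomputable def qq (k : ℕ) : Ak k := Polynomial.X * z k k

noncomputable def w (k : ℕ) (j : Fin (k + 1)) : Ak k :=
  if (j : ℕ) = k then qq k else Polynomial.C (xB k ((j : ℤ) + 1))

noncomputable def psi0 (k : ℕ) : MvPolynomial (Fin (k + 1)) ℚ →ₐ[ℚ] Ak k :=
  MvPolynomial.aeval (w k)

lemma tau_psi (k : ℕ) : (tau k).comp (psiA k) = psi0 k := by
  apply MvPolynomial.algHom_ext
  intro j
  rw [AlgHom.comp_apply, psiA_X]
  rw [map_add, map_mul]
  have htX : tau k Polynomial.X = Polynomial.X := Polynomial.aevalTower_X _ _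
  have htC : ∀ b : Bk k, tau k (Polynomial.C b) = zAlg k b := fun b =>
    Polynomial.aevalTower_C _ _ _
  rw [htX, htC, htC]
  rcases Nat.lt_or_ge (j : ℕ) k with h | h
  · have h1 : ((j : ℤ) + 1) = (((j : ℕ) + 1 : ℕ) : ℤ) := by push_cast; ring
    have h2 : (j : ℤ) = (((j : ℕ) : ℕ) : ℤ) := by push_cast; ring
    rw [h1, zAlg_xB k ((j : ℕ) + 1) (by omega), zAlg_xB k (j : ℕ) (by omega)]
    rw [psi0, MvPolynomial.aeval_X, w, if_neg (by omega)]
    exact z_rec k (j : ℕ)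
  · have hj : (j : ℕ) = k := by omega
    have h1 : ((j : ℤ) + 1) = ((k : ℤ) + 1) := by omega
    have h2 : (j : ℤ) = ((k : ℕ) : ℤ) := by omega
    rw [h1, h2, xB_gt k _ (by omega), map_zero, zAlg_xB k k le_rfl]
    rw [psi0, MvPolynomial.aeval_X, w, if_pos hj, qq]
    ring

/-- The identification `S ≃ B[X]` sending the last variable to `X`. -/
noncomputable def E (k : ℕ) : MvPolynomial (Fin (k + 1)) ℚ ≃ₐ[ℚ] Polynomial (Bk k) :=
  (MvPolynomial.renameEquiv ℚ (finSuccEquiv' (Fin.last k))).trans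
    (MvPolynomial.optionEquivLeft ℚ (Fin k))

lemma psi0_eq (k : ℕ) (s : MvPolynomial (Fin (k + 1)) ℚ) :
    psi0 k s = (E k s).comp (qq k) := by
  have key : psi0 k = ((Polynomial.aeval (qq k)).restrictScalars ℚ).comp
      (E k).toAlgHom := by
    apply MvPolynomial.algHom_ext
    intro j
    rw [AlgHom.comp_apply]
    induction j using Fin.lastCases with
    | last =>
      have hE : E k (MvPolynomial.X (Fin.last k)) = Polynomial.X := by
        rw [E]
        simp only [AlgEquiv.trans_apply, MvPolynomial.renameEquiv_apply,
          MvPolynomial.rename_X, finSuccEquiv'_at, MvPolynomial.optionEquivLeft_X_none]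
      rw [show ((E k).toAlgHom (MvPolynomial.X (Fin.last k)) : Polynomial (Bk k))
          = Polynomial.X from hE]
      rw [AlgHom.coe_restrictScalars', Polynomial.aeval_X]
      rw [psi0, MvPolynomial.aeval_X, w, if_pos (by simp [Fin.val_last])]
    | cast m =>
      have hE : E k (MvPolynomial.X (Fin.castSucc m)) = Polynomial.C (MvPolynomial.X m) := by
        rw [E]
        simp only [AlgEquiv.trans_apply, MvPolynomial.renameEquiv_apply,
          MvPolynomial.rename_X, finSuccEquiv'_below (Fin.castSucc_lt_last m),
          MvPolynomial.optionEquivLeft_X_some]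
      rw [show ((E k).toAlgHom (MvPolynomial.X (Fin.castSucc m)) : Polynomial (Bk k))
          = Polynomial.C (MvPolynomial.X m) from hE]
      rw [AlgHom.coe_restrictScalars', Polynomial.aeval_C]
      rw [psi0, MvPolynomial.aeval_X, w, if_neg (by simp [Fin.coe_castSucc]; omega)]
      have hm : ((Fin.castSucc m : Fin (k+1)) : ℤ) + 1 = ((m : ℕ) : ℤ) + 1 := by
        simp [Fin.coe_castSucc]
      rw [hm, xB_succ k (m : ℕ) m.isLt]
      simp [Polynomial.algebraMap_eq]
  rw [key]
  rfl

lemma natDegree_zkk (k : ℕ) : (z k k).natDegree = k ∧ (z k k).coeff k = (-1 : Bk k) ^ k := by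
  have hcoeff : (z k k).coeff k = (-1 : Bk k) ^ k := by
    rw [z, Polynomial.finset_sum_coeff]
    rw [Finset.sum_eq_single k]
    · have h0 : ((k : ℤ) - (k : ℤ)) = 0 := by ring
      rw [h0, xB_zero, mul_one, Polynomial.coeff_C_mul, Polynomial.coeff_X_pow, if_pos rfl,
        mul_one]
    · intro t _ ht
      rw [Polynomial.coeff_C_mul, Polynomial.coeff_X_pow, if_neg (Ne.symm ht), mul_zero]
    · intro h
      exact absurd (Finset.self_mem_range_succ k) h
  constructor
  · refine le_antisymm ?_ (Polynomial.le_natDegree_of_ne_zero ?_)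
    · refine Polynomial.natDegree_sum_le_of_forall_le _ _ fun t ht => ?_
      refine le_trans (Polynomial.natDegree_C_mul_le _ _) ?_
      rw [Polynomial.natDegree_X_pow]
      exact Nat.lt_succ_iff.mp (Finset.mem_range.mp ht)
    · rw [hcoeff]
      exact pow_ne_zero _ (by simp)
  · exact hcoeff

lemma zkk_ne_zero (k : ℕ) : z k k ≠ 0 := fun h => by
  have := (natDegree_zkk k).2
  rw [h] at this
  simp at this
  exact pow_ne_zero k (neg_ne_zero.mpr (one_ne_zero : (1:Bk k) ≠ 0)) this.symm

lemma natDegree_qq (k : ℕ) : (qq k).natDegree = k + 1 := by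
  rw [qq, Polynomial.natDegree_mul Polynomial.X_ne_zero (zkk_ne_zero k),
    Polynomial.natDegree_X, (natDegree_zkk k).1]
  omega

/-- Core linear-independence lemma: the `q^m X^j`, `j ≤ d`, are independent. -/
lemma core {R : Type*} [CommRing R] [IsDomain R] {d : ℕ} {q : Polynomial R}
    (hq : q.natDegree = d + 1) (g : Fin (d + 1) → Polynomial R)
    (h : ∑ j : Fin (d + 1), (g j).comp q * Polynomial.X ^ (j : ℕ) = 0) :
    ∀ j, g j = 0 := by
  classical
  by_contra hc
  push_neg at hc
  obtain ⟨j₁, hj₁⟩ := hc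
  obtain ⟨j₀, hj₀mem, hj₀max⟩ :=
    (Finset.univ.filter fun j => g j ≠ 0).exists_max_image
      (fun j => (g j).natDegree * (d + 1) + (j : ℕ)) ⟨j₁, by simp [hj₁]⟩
  have hgj₀ : g j₀ ≠ 0 := (Finset.mem_filter.mp hj₀mem).2
  have hqne : q.natDegree ≠ 0 := by omega
  have hdegcomp : ∀ j : Fin (d + 1), ((g j).comp q).natDegree = (g j).natDegree * (d + 1) := by
    intro j
    rw [Polynomial.natDegree_comp, hq]
  have hmod : ∀ j : Fin (d + 1), g j ≠ 0 → j ≠ j₀ →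
      (g j).natDegree * (d + 1) + (j : ℕ) < (g j₀).natDegree * (d + 1) + (j₀ : ℕ) := by
    intro j hgj hjj
    have hle := hj₀max j (by simp [hgj])
    rcases lt_or_eq_of_le hle with h' | h'
    · exact h'
    · exfalso
      apply hjj
      apply Fin.ext
      have e1 : (j : ℕ) = ((g j).natDegree * (d + 1) + (j : ℕ)) % (d + 1) := by
        rw [Nat.mul_add_mod_of_lt j.isLt]
      have e2 : (j₀ : ℕ) = ((g j₀).natDegree * (d + 1) + (j₀ : ℕ)) % (d + 1) := by
        rw [Nat.mul_add_mod_of_lt j₀.isLt]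
      rw [e1, e2, h']
  have hcoeff := congrArg
    (fun p => Polynomial.coeff p ((g j₀).natDegree * (d + 1) + (j₀ : ℕ))) h
  simp only [Polynomial.finset_sum_coeff, Polynomial.coeff_zero] at hcoeff
  rw [Finset.sum_eq_single j₀] at hcoeff
  · rw [Polynomial.coeff_mul_X_pow', if_pos (by omega)] at hcoeff
    have hNd : (g j₀).natDegree * (d + 1) + (j₀ : ℕ) - (j₀ : ℕ)
        = ((g j₀).comp q).natDegree := by
      rw [hdegcomp]
      omega
    rw [hNd, Polynomial.coeff_natDegree, Polynomial.leadingCoeff_comp hqne] at hcoeff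
    have h1 : (g j₀).leadingCoeff ≠ 0 := Polynomial.leadingCoeff_ne_zero.mpr hgj₀
    have hqlc : q.leadingCoeff ≠ 0 := Polynomial.leadingCoeff_ne_zero.mpr
      (fun h0 => by rw [h0] at hq; simp at hq)
    exact (mul_ne_zero h1 (pow_ne_zero _ hqlc)) hcoeff
  · intro j _ hjj
    by_cases hgj : g j = 0
    · simp [hgj]
    · have hlt := hmod j hgj hjj
      rw [Polynomial.coeff_mul_X_pow']
      by_cases hjN : (j : ℕ) ≤ (g j₀).natDegree * (d + 1) + (j₀ : ℕ)
      · rw [if_pos hjN]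
        apply Polynomial.coeff_eq_zero_of_natDegree_lt
        rw [hdegcomp]
        omega
      · rw [if_neg hjN]
  · intro hj
    exact absurd (Finset.mem_univ j₀) hj

/-- The map `S^{k+1} → A`. -/
noncomputable def Fmap (k : ℕ) (f : Fin (k + 1) → MvPolynomial (Fin (k + 1)) ℚ) : Ak k :=
  ∑ j : Fin (k + 1), psi k (f j) * (Polynomial.X : Ak k) ^ (j : ℕ)

/-- The image of `Fmap`. -/
def P (k : ℕ) : Set (Ak k) := Set.range (Fmap k)

lemma P_zero (k : ℕ) : (0 : Ak k) ∈ P k := ⟨0, by simp [Fmap]⟩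

lemma P_add (k : ℕ) {a b : Ak k} (ha : a ∈ P k) (hb : b ∈ P k) : a + b ∈ P k := by
  obtain ⟨f, rfl⟩ := ha
  obtain ⟨g, rfl⟩ := hb
  exact ⟨f + g, by simp [Fmap, add_mul, Finset.sum_add_distrib]⟩

lemma P_neg (k : ℕ) {a : Ak k} (ha : a ∈ P k) : -a ∈ P k := by
  obtain ⟨f, rfl⟩ := ha
  refine ⟨-f, ?_⟩
  rw [Fmap, Fmap, ← Finset.sum_neg_distrib]
  refine Finset.sum_congr rfl fun j _ => ?_
  rw [Pi.neg_apply, map_neg]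
  ring

lemma P_sum (k : ℕ) {ι : Type*} (s : Finset ι) (F : ι → Ak k)
    (h : ∀ i ∈ s, F i ∈ P k) : ∑ i ∈ s, F i ∈ P k :=
  Finset.sum_induction F (· ∈ P k) (fun _ _ => P_add k) (P_zero k) h

lemma P_smul (k : ℕ) (s : MvPolynomial (Fin (k + 1)) ℚ) {a : Ak k} (ha : a ∈ P k) :
    psi k s * a ∈ P k := by
  obtain ⟨f, rfl⟩ := ha
  refine ⟨fun j => s * f j, ?_⟩
  rw [Fmap, Fmap, Finset.mul_sum]
  refine Finset.sum_congr rfl fun j _ => ?_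
  rw [map_mul]
  ring

lemma Xpow_mem (k : ℕ) (m : ℕ) (hm : m ≤ k) : (Polynomial.X : Ak k) ^ m ∈ P k := by
  refine ⟨Pi.single ⟨m, by omega⟩ 1, ?_⟩
  rw [Fmap, Finset.sum_eq_single ⟨m, by omega⟩]
  · simp
  · intro j _ hj
    rw [Pi.single_eq_of_ne hj, map_zero, zero_mul]
  · intro h
    exact absurd (Finset.mem_univ _) h

/-- The telescoping witness. -/
noncomputable def tt (k i : ℕ) : Ak k :=
  (-1 : Ak k) ^ (k + i + 1) * Polynomial.C (xB k ((k : ℤ) + 1 - (i : ℤ))) * Polynomial.X ^ i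

noncomputable def gg (k i : ℕ) : MvPolynomial (Fin (k + 1)) ℚ :=
  (-1) ^ (k + i) * MvPolynomial.X ⟨k - i, by omega⟩

lemma tele (k : ℕ) :
    ∑ i ∈ Finset.range (k + 1), psi k (gg k i) * (Polynomial.X : Ak k) ^ i
      = Polynomial.X ^ (k + 1) := by
  have key : ∀ i ∈ Finset.range (k + 1),
      psi k (gg k i) * (Polynomial.X : Ak k) ^ i = tt k (i + 1) - tt k i := by
    intro i hi
    have hik : i ≤ k := Nat.lt_succ_iff.mp (Finset.mem_range.mp hi)
    have hpsi : psi k (gg k i) = (-1 : Ak k) ^ (k + i) *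
        (Polynomial.C (xB k ((k : ℤ) - (i : ℤ) + 1)) +
          Polynomial.X * Polynomial.C (xB k ((k : ℤ) - (i : ℤ)))) := by
      rw [gg, psi_eq, map_mul, map_pow, map_neg, map_one, psiA_X]
      have hcast : ((⟨k - i, by omega⟩ : Fin (k + 1)) : ℤ) = (k : ℤ) - (i : ℤ) := by
        simp only [Fin.val_mk]
        omega
      rw [hcast]
    rw [hpsi, tt, tt]
    have hc1 : (k : ℤ) + 1 - ((i + 1 : ℕ) : ℤ) = (k : ℤ) - (i : ℤ) := by push_cast; ring
    have hc2 : (k : ℤ) + 1 - (i : ℤ) = (k : ℤ) - (i : ℤ) + 1 := by ring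
    rw [hc1, hc2]
    have hp1 : (-1 : Ak k) ^ (k + (i + 1) + 1) = (-1 : Ak k) ^ (k + i) := by
      have : k + (i + 1) + 1 = (k + i) + 2 := by omega
      rw [this, pow_succ, pow_succ]
      ring
    have hp2 : (-1 : Ak k) ^ (k + i + 1) = -((-1 : Ak k) ^ (k + i)) := by
      rw [pow_succ]
      ring
    rw [hp1, hp2, pow_succ]
    ring
  rw [Finset.sum_congr rfl key, Finset.sum_range_sub]
  have h1 : tt k (k + 1) = Polynomial.X ^ (k + 1) := by
    rw [tt]
    have hc : (k : ℤ) + 1 - ((k + 1 : ℕ) : ℤ) = 0 := by push_cast; ring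
    rw [hc, xB_zero]
    have he : (-1 : Ak k) ^ (k + (k + 1) + 1) = 1 := by
      rw [show k + (k + 1) + 1 = 2 * (k + 1) from by omega, pow_mul]
      norm_num
    rw [he]
    simp
  have h2 : tt k 0 = 0 := by
    rw [tt]
    have hc : (k : ℤ) + 1 - ((0 : ℕ) : ℤ) = (k : ℤ) + 1 := by push_cast; ring
    rw [hc, xB_gt k _ (by omega)]
    simp
  rw [h1, h2, sub_zero]

lemma Xpow_succ_mem (k : ℕ) : (Polynomial.X : Ak k) ^ (k + 1) ∈ P k := by
  refine ⟨fun j => gg k (j : ℕ), ?_⟩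
  rw [Fmap]
  exact (Fin.sum_univ_eq_sum_range
    (fun i => psi k (gg k i) * (Polynomial.X : Ak k) ^ i) (k + 1)).trans (tele k)

lemma Xpow_mem' (k : ℕ) (m : ℕ) (hm : m ≤ k + 1) : (Polynomial.X : Ak k) ^ m ∈ P k := by
  rcases Nat.lt_or_ge m (k + 1) with h | h
  · exact Xpow_mem k m (by omega)
  · have : m = k + 1 := by omega
    rw [this]
    exact Xpow_succ_mem k

lemma P_Xmul (k : ℕ) {a : Ak k} (ha : a ∈ P k) : Polynomial.X * a ∈ P k := by
  obtain ⟨f, rfl⟩ := ha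
  rw [Fmap, Finset.mul_sum]
  have hcongr : ∀ j ∈ Finset.univ, Polynomial.X * (psi k (f j) * (Polynomial.X : Ak k) ^ (j : ℕ))
      = psi k (f j) * (Polynomial.X : Ak k) ^ ((j : ℕ) + 1) := by
    intro j _
    ring
  rw [Finset.sum_congr rfl hcongr]
  exact P_sum k _ _ fun j _ => P_smul k (f j) (Xpow_mem' k ((j : ℕ) + 1) (by omega))

lemma psi_C (k : ℕ) (r : ℚ) :
    psi k (MvPolynomial.C r) = Polynomial.C (MvPolynomial.C r) := by
  rw [psi_eq, psiA, MvPolynomial.aeval_C]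
  simp [Polynomial.algebraMap_apply, MvPolynomial.algebraMap_eq]

lemma P_xBmul (k : ℕ) : ∀ n : ℕ, n ≤ k → ∀ a ∈ P k,
    Polynomial.C (xB k (n : ℤ)) * a ∈ P k := by
  intro n
  induction n with
  | zero =>
    intro _ a ha
    simpa [xB_zero] using ha
  | succ n ih =>
    intro hn a ha
    have hrel : psiA k (MvPolynomial.X ⟨n, by omega⟩) =
        Polynomial.C (xB k ((n : ℤ) + 1)) + Polynomial.X * Polynomial.C (xB k ((n : ℤ))) := by
      rw [psiA_X]
    have heq : Polynomial.C (xB k ((n + 1 : ℕ) : ℤ)) * a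
        = psi k (MvPolynomial.X ⟨n, by omega⟩) * a
          + -(Polynomial.X * (Polynomial.C (xB k ((n : ℕ) : ℤ)) * a)) := by
      rw [psi_eq, hrel]
      have : ((n + 1 : ℕ) : ℤ) = (n : ℤ) + 1 := by push_cast; ring
      rw [this]
      ring
    rw [heq]
    exact P_add k (P_smul k _ ha) (P_neg k (P_Xmul k (ih (by omega) a ha)))

lemma P_Cmul (k : ℕ) (b : Bk k) : ∀ a ∈ P k, Polynomial.C b * a ∈ P k := by
  induction b using MvPolynomial.induction_on with
  | C r =>
    intro a ha
    rw [← psi_C k r]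
    exact P_smul k _ ha
  | add p q hp hq =>
    intro a ha
    rw [map_add, add_mul]
    exact P_add k (hp a ha) (hq a ha)
  | mul_X p v hp =>
    intro a ha
    rw [map_mul, mul_assoc]
    refine hp _ ?_
    have hX : Polynomial.C (MvPolynomial.X v : Bk k) * a ∈ P k := by
      have hcast : ((v : ℕ) : ℤ) + 1 = (((v : ℕ) + 1 : ℕ) : ℤ) := by push_cast; ring
      have := P_xBmul k ((v : ℕ) + 1) (by omega) a ha
      rw [← hcast, xB_succ k (v : ℕ) v.isLt, Fin.eta] at this
      exact this
    exact hX

lemma F_surj (k : ℕ) : Function.Surjective (Fmap k) := by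
  intro p
  suffices h : p ∈ P k by exact h
  induction p using Polynomial.induction_on with
  | C b =>
    have h1 : (1 : Ak k) ∈ P k := by
      have := Xpow_mem k 0 (by omega)
      simpa using this
    simpa using P_Cmul k b 1 h1
  | add p q hp hq => exact P_add k hp hq
  | monomial n b hmono =>
    have heq : Polynomial.C b * Polynomial.X ^ (n + 1)
        = Polynomial.X * (Polynomial.C b * Polynomial.X ^ n) := by ring
    rw [heq]
    exact P_Xmul k hmono

lemma Fmap_zero_iff (k : ℕ) (f : Fin (k + 1) → MvPolynomial (Fin (k + 1)) ℚ)
    (h : Fmap k f = 0) : f = 0 := by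
  have htau : ∑ j : Fin (k + 1), (E k (f j)).comp (qq k) * (Polynomial.X : Ak k) ^ (j : ℕ)
      = 0 := by
    have h1 := congrArg (tau k) h
    rw [map_zero, Fmap, map_sum] at h1
    rw [← h1]
    refine Finset.sum_congr rfl fun j _ => ?_
    have htX : tau k Polynomial.X = Polynomial.X := Polynomial.aevalTower_X _ _
    rw [map_mul, map_pow, htX]
    congr 1
    have h2 : tau k (psiA k (f j)) = psi0 k (f j) := DFunLike.congr_fun (tau_psi k) (f j)
    rw [psi_eq, h2, psi0_eq]
  have hall := core (natDegree_qq k) (fun j => E k (f j)) htau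
  funext j
  have h0 : E k (f j) = E k 0 := by
    rw [map_zero]
    exact hall j
  exact (E k).injective h0

lemma F_inj (k : ℕ) : Function.Injective (Fmap k) := by
  intro f g hfg
  have hsub : Fmap k (f - g) = 0 := by
    rw [Fmap]
    have : ∀ j ∈ Finset.univ, psi k ((f - g) j) * (Polynomial.X : Ak k) ^ (j : ℕ)
        = psi k (f j) * (Polynomial.X : Ak k) ^ (j : ℕ)
          - psi k (g j) * (Polynomial.X : Ak k) ^ (j : ℕ) := by
      intro j _
      rw [Pi.sub_apply, map_sub, sub_mul]
    rw [Finset.sum_congr rfl this, Finset.sum_sub_distrib]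
    rw [show (∑ j : Fin (k + 1), psi k (f j) * (Polynomial.X : Ak k) ^ (j : ℕ)) = Fmap k f
      from rfl]
    rw [show (∑ j : Fin (k + 1), psi k (g j) * (Polynomial.X : Ak k) ^ (j : ℕ)) = Fmap k g
      from rfl]
    rw [hfg, sub_self]
  have := Fmap_zero_iff k (f - g) hsub
  exact sub_eq_zero.mp this

lemma Fmap_single (k : ℕ) (s : MvPolynomial (Fin (k + 1)) ℚ) :
    Fmap k (Pi.single 0 s) = psi k s := by
  rw [Fmap, Finset.sum_eq_single (0 : Fin (k + 1))]
  · simp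
  · intro j _ hj
    rw [Pi.single_eq_of_ne hj, map_zero, zero_mul]
  · intro h
    exact absurd (Finset.mem_univ _) h

end S1

/-- `A = ℚ[x₁,…,x_k,ξ]` is, via `ψ`, a free `S`-module of rank `k+1`
with basis `1, ξ, …, ξᵏ`: the `S`-module map `S^{k+1} → A`, `(f₀,…,f_k) ↦ ∑ ψ(f_j)·ξʲ`,
is bijective.  In particular, `ψ` is injective. -/
theorem statement1 (k : ℕ) :
    Function.Bijective (fun f : Fin (k + 1) → MvPolynomial (Fin (k + 1)) ℚ =>
      ∑ j : Fin (k + 1), psi k (f j) * (Polynomial.X : Ak k) ^ (j : ℕ)) ∧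
    Function.Injective (psi k) := by
  constructor
  · exact ⟨S1.F_inj k, S1.F_surj k⟩
  · intro a b hab
    have h1 : S1.Fmap k (Pi.single 0 a) = S1.Fmap k (Pi.single 0 b) := by
      rw [S1.Fmap_single, S1.Fmap_single, hab]
    have h2 := S1.F_inj k h1
    have h3 := congrFun h2 0
    simpa using h3
end
end

section
/- In T = A ⊗_S A the identity ∑_{ℓ=0}^{k} (−1)ˡ (x_ℓ ⊗ ξ^{k−ℓ}) = ∑_{ℓ=0}^{k} (−1)ˡ (ξ^{k−ℓ} ⊗ x_ℓ) holds, and moreover ξ slides over this element through the tensor product: (ξ ⊗ 1)·∑_{ℓ=0}^{k} (−1)ˡ (x_ℓ ⊗ ξ^{k−ℓ}) = (1 ⊗ ξ)·∑_{ℓ=0}^{k} (−1)ˡ (x_ℓ ⊗ ξ^{k−ℓ}) = ∑_{ℓ=0}^{k} (−1)ˡ (x_ℓ ⊗ ξ^{k−ℓ+1}). -/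
open Polynomial
open scoped TensorProduct

noncomputable section

/-- `A k` is an `S`-algebra via `ψ`. -/
noncomputable instance (k : ℕ) : Algebra (Bk (k + 1)) (Ak k) := (psi k).toAlgebra

/-- `T = A ⊗_S A`, the cohomology-ring model of `Ω_{k(k+1)k}`. -/
abbrev Tk (k : ℕ) : Type := Ak k ⊗[Bk (k + 1)] Ak k

/-- The element `∑_{ℓ=0}^{k} (−1)ˡ (x_ℓ ⊗ ξ^{k−ℓ})` of `T`. -/
noncomputable def elt (k : ℕ) : Tk k :=
  ∑ l ∈ Finset.range (k + 1),
    ((-1 : Ak k) ^ l * xA k (l : ℤ)) ⊗ₜ[Bk (k + 1)] ((Polynomial.X : Ak k) ^ (k - l))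

namespace Stmt2Aux

noncomputable def sY (k : ℕ) (j : ℕ) : Bk (k + 1) :=
  if h0 : j = 0 then 1
  else if h : j ≤ k + 1 then MvPolynomial.X ⟨j - 1, by omega⟩ else 0

noncomputable def Y (k : ℕ) (j : ℕ) : Ak k := algebraMap (Bk (k + 1)) (Ak k) (sY k j)

lemma xA_zero (k : ℕ) : xA k 0 = 1 := by simp [xA, xB]

lemma xA_neg (k : ℕ) : xA k (-1) = 0 := by
  simp only [xA, xB]
  norm_num

lemma xA_big (k : ℕ) (j : ℤ) (h : (k : ℤ) < j) : xA k j = 0 := by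
  simp only [xA, xB]
  rw [if_neg (by omega), dif_neg (by omega), map_zero]

lemma Y_val (k : ℕ) (j : ℕ) :
    Y k j = xA k (j : ℤ) + Polynomial.X * xA k ((j : ℤ) - 1) := by
  rcases Nat.eq_zero_or_pos j with h0 | h0
  · subst h0
    simp [Y, sY, xA_zero, xA_neg]
  rcases Nat.lt_or_ge (k + 1) j with hbig | hle
  · rw [Y, sY, dif_neg (by omega), dif_neg (by omega), map_zero,
      xA_big k _ (by omega), xA_big k _ (by push_cast; omega)]
    ring
  · rw [Y, sY, dif_neg (by omega), dif_pos hle]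
    have : algebraMap (Bk (k + 1)) (Ak k) = psi k := rfl
    rw [this]
    show (MvPolynomial.aeval fun j : Fin (k + 1) =>
      xA k ((j : ℤ) + 1) + Polynomial.X * xA k (j : ℤ)) (MvPolynomial.X _) = _
    rw [MvPolynomial.aeval_X]
    have h1 : ((j - 1 : ℕ) : ℤ) = (j : ℤ) - 1 := by omega
    simp only [h1]
    ring_nf

lemma x_rec (k : ℕ) (j : ℕ) :
    Polynomial.X * xA k (j : ℤ) = Y k (j + 1) - xA k ((j : ℤ) + 1) := by
  rw [Y_val]
  push_cast
  ring_nf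

lemma Y_zero (k : ℕ) : Y k 0 = 1 := by simp [Y, sY]

lemma x_sum (k : ℕ) (j : ℕ) :
    xA k (j : ℤ) = ∑ i ∈ Finset.range (j + 1),
      (-1 : Ak k) ^ i * Polynomial.X ^ i * Y k (j - i) := by
  induction j with
  | zero => simp [xA_zero, Y_zero]
  | succ j ih =>
    rw [Finset.sum_range_succ']
    have : ∀ i, (-1 : Ak k) ^ (i + 1) * Polynomial.X ^ (i + 1) * Y k (j + 1 - (i + 1))
        = -(Polynomial.X * ((-1 : Ak k) ^ i * Polynomial.X ^ i * Y k (j - i))) := by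
      intro i
      rw [Nat.succ_sub_succ]
      ring
    rw [Finset.sum_congr rfl fun i _ => this i, Finset.sum_neg_distrib, ← Finset.mul_sum,
      ← ih]
    simp only [pow_zero, one_mul, Nat.sub_zero]
    have h2 := x_rec k j
    push_cast at h2 ⊢
    rw [h2]
    ring

end Stmt2Aux

namespace Stmt2Aux

lemma moveS (k : ℕ) (s : Bk (k + 1)) (a b : Ak k) :
    (algebraMap (Bk (k + 1)) (Ak k) s * a) ⊗ₜ[Bk (k + 1)] b
      = a ⊗ₜ[Bk (k + 1)] (algebraMap (Bk (k + 1)) (Ak k) s * b) := by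
  rw [← Algebra.smul_def, ← Algebra.smul_def, TensorProduct.smul_tmul]

lemma moveY (k : ℕ) (j : ℕ) (a b : Ak k) :
    (Y k j * a) ⊗ₜ[Bk (k + 1)] b = a ⊗ₜ[Bk (k + 1)] (Y k j * b) := moveS k _ a b

lemma tri {M : Type*} [AddCommMonoid M] (k : ℕ) (f : ℕ → ℕ → M) :
    ∑ l ∈ Finset.range (k + 1), ∑ i ∈ Finset.range (l + 1), f l i
      = ∑ j ∈ Finset.range (k + 1), ∑ i ∈ Finset.range (k - j + 1), f (j + i) i := by
  rw [Finset.sum_sigma', Finset.sum_sigma']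
  refine Finset.sum_nbij' (fun p : Σ _ : ℕ, ℕ => (⟨p.1 - p.2, p.2⟩ : Σ _ : ℕ, ℕ))
    (fun p : Σ _ : ℕ, ℕ => (⟨p.1 + p.2, p.2⟩ : Σ _ : ℕ, ℕ))
    (fun p hp => ?_) (fun p hp => ?_) (fun p hp => ?_) (fun p hp => ?_) (fun p hp => ?_)
  all_goals simp only [Finset.mem_sigma, Finset.mem_range] at hp ⊢
  · omega
  · omega
  · exact Sigma.ext (show p.1 - p.2 + p.2 = p.1 by omega) (by simp)
  · exact Sigma.ext (show p.1 + p.2 - p.2 = p.1 by omega) (by simp)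
  · show f p.1 p.2 = f (p.1 - p.2 + p.2) p.2
    congr 2
    omega

end Stmt2Aux

namespace Stmt2Aux

open Finset

noncomputable def Mel (k : ℕ) : Tk k :=
  ∑ j ∈ Finset.range (k + 1), ∑ i ∈ Finset.range (k - j + 1),
    ((-1 : Ak k) ^ j * Polynomial.X ^ i) ⊗ₜ[Bk (k + 1)]
      (Y k j * Polynomial.X ^ (k - (j + i)))

noncomputable def elt' (k : ℕ) : Tk k :=
  ∑ l ∈ Finset.range (k + 1),
    ((-1 : Ak k) ^ l * xA k (l : ℤ)) ⊗ₜ[Bk (k + 1)] ((Polynomial.X : Ak k) ^ (k - l))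

lemma neg_one_pow_sq (k i : ℕ) : (-1 : Ak k) ^ i * (-1 : Ak k) ^ i = 1 := by
  rw [← pow_add, ← two_mul, pow_mul]
  norm_num

lemma elt_eq_M (k : ℕ) : elt' k = Mel k := by
  have step1 : elt' k = ∑ l ∈ Finset.range (k + 1), ∑ i ∈ Finset.range (l + 1),
      ((-1 : Ak k) ^ l * ((-1 : Ak k) ^ i * Polynomial.X ^ i * Y k (l - i)))
        ⊗ₜ[Bk (k + 1)] ((Polynomial.X : Ak k) ^ (k - l)) := by
    refine Finset.sum_congr rfl fun l _ => ?_
    rw [x_sum k l, Finset.mul_sum, TensorProduct.sum_tmul]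
  rw [step1, tri k]
  refine Finset.sum_congr rfl fun j hj => Finset.sum_congr rfl fun i hi => ?_
  rw [Nat.add_sub_cancel]
  have hleft : (-1 : Ak k) ^ (j + i) * ((-1 : Ak k) ^ i * Polynomial.X ^ i * Y k j)
      = Y k j * ((-1 : Ak k) ^ j * Polynomial.X ^ i) := by
    rw [pow_add]
    linear_combination ((-1 : Ak k) ^ j * Polynomial.X ^ i * Y k j) * neg_one_pow_sq k i
  rw [hleft, moveY k j ((-1 : Ak k) ^ j * Polynomial.X ^ i) (Polynomial.X ^ (k - (j + i)))]

lemma rhs1_eq_M (k : ℕ) :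
    (∑ l ∈ Finset.range (k + 1),
      ((-1 : Ak k) ^ l * (Polynomial.X : Ak k) ^ (k - l)) ⊗ₜ[Bk (k + 1)] xA k (l : ℤ))
      = Mel k := by
  have step1 : (∑ l ∈ Finset.range (k + 1),
      ((-1 : Ak k) ^ l * (Polynomial.X : Ak k) ^ (k - l)) ⊗ₜ[Bk (k + 1)] xA k (l : ℤ))
      = ∑ l ∈ Finset.range (k + 1), ∑ i ∈ Finset.range (l + 1),
        ((-1 : Ak k) ^ l * (Polynomial.X : Ak k) ^ (k - l)) ⊗ₜ[Bk (k + 1)]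
          ((-1 : Ak k) ^ i * Polynomial.X ^ i * Y k (l - i)) := by
    refine Finset.sum_congr rfl fun l _ => ?_
    rw [x_sum k l, TensorProduct.tmul_sum]
  rw [step1, tri k]
  refine Finset.sum_congr rfl fun j hj => ?_
  simp only [Finset.mem_range] at hj
  have hmove : ∀ i : ℕ,
      ((-1 : Ak k) ^ (j + i) * (Polynomial.X : Ak k) ^ (k - (j + i))) ⊗ₜ[Bk (k + 1)]
          ((-1 : Ak k) ^ i * Polynomial.X ^ i * Y k (j + i - i))
        = ((-1 : Ak k) ^ j * (Polynomial.X : Ak k) ^ (k - (j + i))) ⊗ₜ[Bk (k + 1)]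
          (Polynomial.X ^ i * Y k j) := by
    intro i
    rw [Nat.add_sub_cancel]
    have hminus : (-1 : Ak k) = algebraMap (Bk (k + 1)) (Ak k) (-1) := by
      rw [map_neg, map_one]
    have h1 : ((-1 : Ak k) ^ i * Polynomial.X ^ i * Y k j)
        = algebraMap (Bk (k + 1)) (Ak k) ((-1) ^ i) * (Polynomial.X ^ i * Y k j) := by
      rw [map_pow, ← hminus]; ring
    rw [h1, ← moveS]
    congr 1
    rw [map_pow, ← hminus, pow_add]
    linear_combination ((-1 : Ak k) ^ j * Polynomial.X ^ (k - (j + i))) * neg_one_pow_sq k i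
  rw [Finset.sum_congr rfl fun i _ => hmove i,
    ← Finset.sum_range_reflect (fun i => ((-1 : Ak k) ^ j * (Polynomial.X : Ak k) ^ (k - (j + i)))
      ⊗ₜ[Bk (k + 1)] (Polynomial.X ^ i * Y k j)) (k - j + 1)]
  refine Finset.sum_congr rfl fun i hi => ?_
  simp only [Finset.mem_range] at hi
  have e1 : k - j + 1 - 1 - i = k - j - i := by omega
  have e2 : k - (j + (k - j - i)) = i := by omega
  have e3 : k - j - i = k - (j + i) := by omega
  rw [e1, e2, e3, mul_comm (Polynomial.X ^ (k - (j + i))) (Y k j)]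

end Stmt2Aux

namespace Stmt2Aux

noncomputable def Gf (k m : ℕ) : Tk k :=
  ((-1 : Ak k) ^ m) ⊗ₜ[Bk (k + 1)] (xA k (m : ℤ) * Polynomial.X ^ (k - m + 1))

noncomputable def Hf (k m : ℕ) : Tk k :=
  ((-1 : Ak k) ^ m * xA k (m : ℤ)) ⊗ₜ[Bk (k + 1)] ((Polynomial.X : Ak k) ^ (k - m + 1))

lemma xA_succ_k (k : ℕ) : xA k ((k + 1 : ℕ) : ℤ) = 0 := xA_big k _ (by push_cast; omega)

lemma Gf_top (k : ℕ) : Gf k (k + 1) = 0 := by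
  rw [Gf, xA_succ_k, zero_mul, TensorProduct.tmul_zero]

lemma Hf_top (k : ℕ) : Hf k (k + 1) = 0 := by
  rw [Hf, xA_succ_k, mul_zero, TensorProduct.zero_tmul]

lemma key (k l : ℕ) (hl : l ≤ k) :
    ((Polynomial.X : Ak k) ⊗ₜ[Bk (k + 1)] (1 : Ak k)) *
        (((-1 : Ak k) ^ l * xA k (l : ℤ)) ⊗ₜ[Bk (k + 1)] ((Polynomial.X : Ak k) ^ (k - l)))
      = (Gf k l - Gf k (l + 1)) + Hf k (l + 1) := by
  rw [Algebra.TensorProduct.tmul_mul_tmul, one_mul]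
  have hx : (Polynomial.X : Ak k) * ((-1 : Ak k) ^ l * xA k (l : ℤ))
      = (-1 : Ak k) ^ l * Y k (l + 1) - (-1 : Ak k) ^ l * xA k ((l : ℤ) + 1) := by
    have h := x_rec k l
    linear_combination (-1 : Ak k) ^ l * h
  rw [hx, TensorProduct.sub_tmul]
  have hY : Y k (l + 1) = xA k ((l : ℤ) + 1) + Polynomial.X * xA k (l : ℤ) := by
    rw [Y_val]
    push_cast
    ring_nf
  have hfirst : ((-1 : Ak k) ^ l * Y k (l + 1)) ⊗ₜ[Bk (k + 1)]
        ((Polynomial.X : Ak k) ^ (k - l))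
      = ((-1 : Ak k) ^ l) ⊗ₜ[Bk (k + 1)] (Y k (l + 1) * Polynomial.X ^ (k - l)) := by
    rw [mul_comm ((-1 : Ak k) ^ l) (Y k (l + 1)),
      moveY k (l + 1) ((-1 : Ak k) ^ l) (Polynomial.X ^ (k - l))]
  rw [hfirst, hY]
  have hcast : ((l + 1 : ℕ) : ℤ) = (l : ℤ) + 1 := by push_cast; ring
  rcases Nat.lt_or_ge l k with hlt | hge
  · -- l < k
    have e1 : k - (l + 1) + 1 = k - l := by omega
    have hsplit : (xA k ((l : ℤ) + 1) + Polynomial.X * xA k (l : ℤ)) *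
          (Polynomial.X : Ak k) ^ (k - l)
        = xA k ((l : ℤ) + 1) * Polynomial.X ^ (k - l)
          + xA k (l : ℤ) * Polynomial.X ^ (k - l + 1) := by
      rw [pow_succ]
      ring
    rw [hsplit, TensorProduct.tmul_add]
    have hA : Gf k (l + 1) = -(((-1 : Ak k) ^ l) ⊗ₜ[Bk (k + 1)]
        (xA k ((l : ℤ) + 1) * Polynomial.X ^ (k - l))) := by
      rw [Gf, hcast, e1, show (-1 : Ak k) ^ (l + 1) = -((-1 : Ak k) ^ l) by ring]
      exact TensorProduct.neg_tmul _ _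
    have hB : Hf k (l + 1) = -(((-1 : Ak k) ^ l * xA k ((l : ℤ) + 1)) ⊗ₜ[Bk (k + 1)]
        ((Polynomial.X : Ak k) ^ (k - l))) := by
      rw [Hf, hcast, e1, show (-1 : Ak k) ^ (l + 1) * xA k ((l : ℤ) + 1)
        = -((-1 : Ak k) ^ l * xA k ((l : ℤ) + 1)) by ring]
      exact TensorProduct.neg_tmul _ _
    rw [hA, hB, Gf]
    abel
  · -- l = k
    have hlk : l = k := le_antisymm hl hge
    have h0 : xA k ((l : ℤ) + 1) = 0 := by
      rw [hlk]
      have := xA_succ_k k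
      push_cast at this
      exact this
    have e0 : k - l = 0 := by omega
    rw [show l + 1 = k + 1 by omega, Gf_top, Hf_top, h0, e0, pow_zero]
    simp only [zero_add, mul_one, mul_zero, TensorProduct.zero_tmul, sub_zero, add_zero]
    rw [Gf, e0]
    congr 1
    ring

end Stmt2Aux

namespace Stmt2Aux

lemma GH0 (k : ℕ) : Gf k 0 = Hf k 0 := by
  simp [Gf, Hf, xA_zero]

lemma slide (k : ℕ) :
    ((Polynomial.X : Ak k) ⊗ₜ[Bk (k + 1)] (1 : Ak k)) * elt' k
      = ∑ l ∈ Finset.range (k + 1), Hf k l := by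
  rw [elt', Finset.mul_sum]
  rw [Finset.sum_congr rfl fun l hl =>
    key k l (Nat.lt_succ_iff.mp (Finset.mem_range.mp hl))]
  rw [Finset.sum_add_distrib, Finset.sum_range_sub' (Gf k) (k + 1)]
  have h3 : ∑ l ∈ Finset.range (k + 1), Hf k (l + 1)
      = ((∑ l ∈ Finset.range (k + 1), Hf k l) + Hf k (k + 1)) - Hf k 0 := by
    have h1 := Finset.sum_range_succ' (Hf k) (k + 1)
    rw [Finset.sum_range_succ (Hf k) (k + 1)] at h1
    rw [eq_sub_iff_add_eq]
    exact h1.symm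
  rw [h3, Gf_top, Hf_top, GH0]
  abel

end Stmt2Aux

open Stmt2Aux in
theorem statement2' (k : ℕ) :
    elt' k = (∑ l ∈ Finset.range (k + 1),
        ((-1 : Ak k) ^ l * (Polynomial.X : Ak k) ^ (k - l)) ⊗ₜ[Bk (k + 1)] xA k (l : ℤ)) ∧
    ((Polynomial.X : Ak k) ⊗ₜ[Bk (k + 1)] (1 : Ak k)) * elt' k
      = ((1 : Ak k) ⊗ₜ[Bk (k + 1)] (Polynomial.X : Ak k)) * elt' k ∧
    ((Polynomial.X : Ak k) ⊗ₜ[Bk (k + 1)] (1 : Ak k)) * elt' k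
      = ∑ l ∈ Finset.range (k + 1),
          ((-1 : Ak k) ^ l * xA k (l : ℤ)) ⊗ₜ[Bk (k + 1)] ((Polynomial.X : Ak k) ^ (k - l + 1)) := by
  have hslide : ((Polynomial.X : Ak k) ⊗ₜ[Bk (k + 1)] (1 : Ak k)) * elt' k
      = ∑ l ∈ Finset.range (k + 1),
          ((-1 : Ak k) ^ l * xA k (l : ℤ)) ⊗ₜ[Bk (k + 1)] ((Polynomial.X : Ak k) ^ (k - l + 1)) := by
    rw [slide k]
    exact Finset.sum_congr rfl fun l _ => by rw [Hf]
  refine ⟨?_, ?_, hslide⟩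
  · rw [elt_eq_M, rhs1_eq_M]
  · rw [hslide, elt', Finset.mul_sum]
    refine Finset.sum_congr rfl fun l _ => ?_
    rw [Algebra.TensorProduct.tmul_mul_tmul, one_mul, ← pow_succ']


/-- In `T = A ⊗_S A`:
`∑_{ℓ=0}^{k} (−1)ˡ (x_ℓ ⊗ ξ^{k−ℓ}) = ∑_{ℓ=0}^{k} (−1)ˡ (ξ^{k−ℓ} ⊗ x_ℓ)`, and `ξ` slides over
this element through the tensor product:
`(ξ ⊗ 1)·∑ (−1)ˡ (x_ℓ ⊗ ξ^{k−ℓ}) = (1 ⊗ ξ)·∑ (−1)ˡ (x_ℓ ⊗ ξ^{k−ℓ}) = ∑ (−1)ˡ (x_ℓ ⊗ ξ^{k−ℓ+1})`. -/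
theorem statement2 (k : ℕ) :
    elt k = (∑ l ∈ Finset.range (k + 1),
        ((-1 : Ak k) ^ l * (Polynomial.X : Ak k) ^ (k - l)) ⊗ₜ[Bk (k + 1)] xA k (l : ℤ)) ∧
    ((Polynomial.X : Ak k) ⊗ₜ[Bk (k + 1)] (1 : Ak k)) * elt k
      = ((1 : Ak k) ⊗ₜ[Bk (k + 1)] (Polynomial.X : Ak k)) * elt k ∧
    ((Polynomial.X : Ak k) ⊗ₜ[Bk (k + 1)] (1 : Ak k)) * elt k
      = ∑ l ∈ Finset.range (k + 1),
          ((-1 : Ak k) ^ l * xA k (l : ℤ)) ⊗ₜ[Bk (k + 1)] ((Polynomial.X : Ak k) ^ (k - l + 1)) := by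
  have he : elt k = Stmt2Aux.elt' k := rfl
  rw [he]
  exact statement2' k
end
end

section
/- For all i, j ≥ 0 the following identities hold in ℚ[ξ₁,ξ₂]: ξ₁ⁱξ₂ʲ = X(ξ₁^{i+1}ξ₂ʲ) − X(ξ₁ⁱξ₂ʲ)·ξ₂ and ξ₁ⁱξ₂ʲ = ξ₁·X(ξ₁ⁱξ₂ʲ) − X(ξ₁ⁱξ₂^{j+1}); consequently X(ξ₁^{i+1}ξ₂^{j+1}) = ξ₁·X(ξ₁ⁱξ₂ʲ)·ξ₂. -/
noncomputable section

/-- `ℚ[ξ₁,ξ₂]`. -/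
abbrev R2 : Type := MvPolynomial (Fin 2) ℚ

/-- The variable `ξ₁`. -/
noncomputable def xi1 : R2 := MvPolynomial.X 0

/-- The variable `ξ₂`. -/
noncomputable def xi2 : R2 := MvPolynomial.X 1

/-- Auxiliary: the monomial `ξ₁^(n-l) ξ₂^l`. -/
noncomputable def gmon (n l : ℕ) : R2 := xi1 ^ (n - l) * xi2 ^ l

lemma gmon_mul_xi2 (n m : ℕ) :
    (∑ l ∈ Finset.range m, gmon n l) * xi2 = ∑ l ∈ Finset.range m, gmon (n + 1) (l + 1) := by
  rw [Finset.sum_mul]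
  refine Finset.sum_congr rfl fun l _ => ?_
  simp only [gmon, Nat.succ_sub_succ]
  ring

lemma xi1_mul_gmon (n m : ℕ) (h : m ≤ n + 1) :
    xi1 * (∑ l ∈ Finset.range m, gmon n l) = ∑ l ∈ Finset.range m, gmon (n + 1) l := by
  rw [Finset.mul_sum]
  refine Finset.sum_congr rfl fun l hl => ?_
  simp only [Finset.mem_range] at hl
  have hsub : n + 1 - l = (n - l) + 1 := by omega
  simp only [gmon, hsub, pow_succ]
  ring

/-- Let `X` be the ℚ-linear endomorphism of `ℚ[ξ₁,ξ₂]` defined on monomials by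
`X(ξ₁ⁱξ₂ʲ) = ∑_{ℓ=0}^{i−1} ξ₁^{i+j−1−ℓ}ξ₂^{ℓ} − ∑_{ℓ=0}^{j−1} ξ₁^{i+j−1−ℓ}ξ₂^{ℓ}`.
Then for all `i, j ≥ 0`:
`ξ₁ⁱξ₂ʲ = X(ξ₁^{i+1}ξ₂ʲ) − X(ξ₁ⁱξ₂ʲ)·ξ₂` and `ξ₁ⁱξ₂ʲ = ξ₁·X(ξ₁ⁱξ₂ʲ) − X(ξ₁ⁱξ₂^{j+1})`;
consequently `X(ξ₁^{i+1}ξ₂^{j+1}) = ξ₁·X(ξ₁ⁱξ₂ʲ)·ξ₂`. -/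
theorem statement6 (Xop : R2 →ₗ[ℚ] R2)
    (hX : ∀ i j : ℕ, Xop (xi1 ^ i * xi2 ^ j)
      = ∑ l ∈ Finset.range i, xi1 ^ (i + j - 1 - l) * xi2 ^ l
        - ∑ l ∈ Finset.range j, xi1 ^ (i + j - 1 - l) * xi2 ^ l) :
    ∀ i j : ℕ,
      (xi1 ^ i * xi2 ^ j = Xop (xi1 ^ (i + 1) * xi2 ^ j) - Xop (xi1 ^ i * xi2 ^ j) * xi2) ∧
      (xi1 ^ i * xi2 ^ j = xi1 * Xop (xi1 ^ i * xi2 ^ j) - Xop (xi1 ^ i * xi2 ^ (j + 1))) ∧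
      (Xop (xi1 ^ (i + 1) * xi2 ^ (j + 1)) = xi1 * Xop (xi1 ^ i * xi2 ^ j) * xi2) := by
  intro i j
  rcases Nat.eq_zero_or_pos (i + j) with h0 | hpos
  · obtain ⟨rfl, rfl⟩ : i = 0 ∧ j = 0 := by omega
    have a0 : Xop 1 = 0 := by simpa using hX 0 0
    have a1 : Xop xi1 = 1 := by simpa using hX 1 0
    have a2 : Xop xi2 = -1 := by simpa using hX 0 1
    have a3 : Xop (xi1 * xi2) = 0 := by simpa using hX 1 1
    refine ⟨?_, ?_, ?_⟩ <;> simp [a0, a1, a2, a3]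
  · have hn1 : i + j - 1 + 1 = i + j := by omega
    have e1 : Xop (xi1 ^ i * xi2 ^ j)
        = ∑ l ∈ Finset.range i, gmon (i + j - 1) l
          - ∑ l ∈ Finset.range j, gmon (i + j - 1) l := by
      rw [hX i j]; rfl
    have e2 : Xop (xi1 ^ (i + 1) * xi2 ^ j)
        = ∑ l ∈ Finset.range (i + 1), gmon (i + j) l
          - ∑ l ∈ Finset.range j, gmon (i + j) l := by
      rw [hX (i + 1) j]
      simp only [show i + 1 + j - 1 = i + j from by omega]
      rfl
    have e3 : Xop (xi1 ^ i * xi2 ^ (j + 1))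
        = ∑ l ∈ Finset.range i, gmon (i + j) l
          - ∑ l ∈ Finset.range (j + 1), gmon (i + j) l := by
      rw [hX i (j + 1)]
      simp only [show i + (j + 1) - 1 = i + j from by omega]
      rfl
    have e4 : Xop (xi1 ^ (i + 1) * xi2 ^ (j + 1))
        = ∑ l ∈ Finset.range (i + 1), gmon (i + j + 1) l
          - ∑ l ∈ Finset.range (j + 1), gmon (i + j + 1) l := by
      rw [hX (i + 1) (j + 1)]
      simp only [show i + 1 + (j + 1) - 1 = i + j + 1 from by omega]
      rfl
    have hgj : gmon (i + j) j = xi1 ^ i * xi2 ^ j := by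
      simp [gmon, show i + j - j = i from by omega]
    refine ⟨?_, ?_, ?_⟩
    · rw [e2, e1, sub_mul, gmon_mul_xi2, gmon_mul_xi2]
      simp only [hn1]
      rw [Finset.sum_range_succ' (fun l => gmon (i + j) l) i]
      have tel : (∑ l ∈ Finset.range j, gmon (i + j) l)
          - (∑ l ∈ Finset.range j, gmon (i + j) (l + 1))
          = gmon (i + j) 0 - gmon (i + j) j := by
        rw [← Finset.sum_sub_distrib, Finset.sum_range_sub' (fun l => gmon (i + j) l)]
      linear_combination tel - hgj
    · rw [e1, e3, mul_sub, xi1_mul_gmon _ _ (by omega), xi1_mul_gmon _ _ (by omega)]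
      simp only [hn1]
      rw [Finset.sum_range_succ]
      linear_combination -hgj
    · rw [e4, e1, mul_sub,
        xi1_mul_gmon _ _ (by omega), xi1_mul_gmon _ _ (by omega)]
      simp only [hn1]
      rw [sub_mul, gmon_mul_xi2, gmon_mul_xi2,
        Finset.sum_range_succ' (fun l => gmon (i + j + 1) l) i,
        Finset.sum_range_succ' (fun l => gmon (i + j + 1) l) j]
      ring
end
end

section
/- On P_n the following operator identities hold for every 1 ≤ i ≤ n−1: ∂_i∘W_j = W_j∘∂_i for every j ≠ i, and ∂_i∘W_i = W_i∘∂_i + W_{i+1}∘(∂_i∘X_{i+1} − X_{i+1}∘∂_i). (These are the defining relations of the smash-product presentation of the extended nilHecke algebra A_n of the paper.) -/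
open scoped TensorProduct

set_option synthInstance.maxHeartbeats 1000000
set_option maxHeartbeats 1000000

noncomputable section

/-- The polynomial ring `ℚ[x₁,…,x_n]`. -/
abbrev Rp (n : ℕ) : Type := MvPolynomial (Fin n) ℚ

/-- The exterior ℚ-algebra `Λ(ω₁,…,ω_n)` on `n` generators. -/
abbrev Ep (n : ℕ) : Type := ExteriorAlgebra ℚ (Fin n → ℚ)

/-- `P_n = ℚ[x₁,…,x_n] ⊗ Λ(ω₁,…,ω_n)`. -/
abbrev Pn (n : ℕ) : Type := Rp n ⊗[ℚ] Ep n

noncomputable instance (n : ℕ) : Ring (Pn n) := inferInstance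
noncomputable instance (n : ℕ) : Algebra ℚ (Pn n) := inferInstance

/-- The (central) polynomial generator `x_j` of `P_n`. -/
noncomputable def xE (n : ℕ) (j : Fin n) : Pn n := (MvPolynomial.X j) ⊗ₜ[ℚ] (1 : Ep n)

/-- The odd generator `ω_j` of `P_n`. -/
noncomputable def wE (n : ℕ) (j : Fin n) : Pn n :=
  (1 : Rp n) ⊗ₜ[ℚ] ExteriorAlgebra.ι ℚ (Pi.single j (1 : ℚ))

/-- The defining values of the ℚ-algebra automorphism `σ_i` on the generators. -/
def SigmaProps (n : ℕ) (σ : ∀ i : ℕ, i + 1 < n → (Pn n ≃ₐ[ℚ] Pn n)) : Prop :=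
  ∀ (i : ℕ) (hi : i + 1 < n),
    σ i hi (xE n ⟨i, by omega⟩) = xE n ⟨i + 1, hi⟩ ∧
    σ i hi (xE n ⟨i + 1, hi⟩) = xE n ⟨i, by omega⟩ ∧
    (∀ j : Fin n, (j : ℕ) ≠ i → (j : ℕ) ≠ i + 1 → σ i hi (xE n j) = xE n j) ∧
    σ i hi (wE n ⟨i, by omega⟩)
      = wE n ⟨i, by omega⟩ + (xE n ⟨i, by omega⟩ - xE n ⟨i + 1, hi⟩) * wE n ⟨i + 1, hi⟩ ∧
    (∀ j : Fin n, (j : ℕ) ≠ i → σ i hi (wE n j) = wE n j)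

lemma mul_tmul_one (n : ℕ) (p : Rp n) (t : Pn n) :
    (p ⊗ₜ[ℚ] (1 : Ep n)) * t = LinearMap.rTensor (Ep n) (LinearMap.mulLeft ℚ p) t := by
  induction t using TensorProduct.induction_on with
  | zero => simp
  | tmul q e => simp [Algebra.TensorProduct.tmul_mul_tmul]
  | add a b ha hb => rw [mul_add, map_add, ha, hb]

lemma cancel_left (n : ℕ) (i : ℕ) (hi : i + 1 < n) {a b : Pn n}
    (h : (xE n ⟨i, by omega⟩ - xE n ⟨i + 1, hi⟩) * a
       = (xE n ⟨i, by omega⟩ - xE n ⟨i + 1, hi⟩) * b) : a = b := by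
  set p : Rp n := MvPolynomial.X ⟨i, by omega⟩ - MvPolynomial.X ⟨i + 1, hi⟩ with hpdef
  have hx : xE n ⟨i, by omega⟩ - xE n ⟨i + 1, hi⟩ = p ⊗ₜ[ℚ] (1 : Ep n) := by
    rw [hpdef, TensorProduct.sub_tmul]; rfl
  have hne : (⟨i, by omega⟩ : Fin n) ≠ ⟨i + 1, hi⟩ := by
    intro h; rw [Fin.mk.injEq] at h; omega
  have hp : p ≠ 0 := sub_ne_zero.mpr (fun h => hne (MvPolynomial.X_injective h))
  have hinj : Function.Injective (LinearMap.rTensor (Ep n) (LinearMap.mulLeft ℚ p)) := by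
    apply Module.Flat.rTensor_preserves_injective_linearMap
    intro a b hab
    simp only [LinearMap.mulLeft_apply] at hab
    exact mul_left_cancel₀ hp hab
  apply hinj
  rw [← mul_tmul_one, ← mul_tmul_one, ← hx]
  exact h

lemma xE_comm (n : ℕ) (j : Fin n) (t : Pn n) : xE n j * t = t * xE n j := by
  induction t using TensorProduct.induction_on with
  | zero => simp
  | tmul q e =>
      show (MvPolynomial.X j ⊗ₜ[ℚ] (1 : Ep n)) * (q ⊗ₜ e) = (q ⊗ₜ e) * (MvPolynomial.X j ⊗ₜ[ℚ] 1)
      rw [Algebra.TensorProduct.tmul_mul_tmul, Algebra.TensorProduct.tmul_mul_tmul,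
        mul_comm, one_mul, mul_one]
  | add a b ha hb => rw [mul_add, add_mul, ha, hb]

/-- With `∂_i` the divided-difference operator
`∂_i(f) = (f − σ_i(f))/(x_i − x_{i+1})`, the following operator identities hold on `P_n`:
`∂_i∘W_j = W_j∘∂_i` for every `j ≠ i`, and
`∂_i∘W_i = W_i∘∂_i + W_{i+1}∘(∂_i∘X_{i+1} − X_{i+1}∘∂_i)`,
where `X_j` and `W_j` denote left multiplication by `x_j` and `ω_j` respectively. -/
theorem statement12 (n : ℕ)
    (σ : ∀ i : ℕ, i + 1 < n → (Pn n ≃ₐ[ℚ] Pn n)) (hσ : SigmaProps n σ)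
    (D : ∀ i : ℕ, i + 1 < n → Module.End ℚ (Pn n))
    (hD : ∀ (i : ℕ) (hi : i + 1 < n) (f : Pn n),
      (xE n ⟨i, by omega⟩ - xE n ⟨i + 1, hi⟩) * (D i hi f) = f - σ i hi f) :
    ∀ (i : ℕ) (hi : i + 1 < n),
      (∀ j : Fin n, (j : ℕ) ≠ i →
        D i hi * LinearMap.mulLeft ℚ (wE n j)
          = LinearMap.mulLeft ℚ (wE n j) * D i hi) ∧
      D i hi * LinearMap.mulLeft ℚ (wE n ⟨i, by omega⟩)
        = LinearMap.mulLeft ℚ (wE n ⟨i, by omega⟩) * D i hi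
          + LinearMap.mulLeft ℚ (wE n ⟨i + 1, hi⟩)
            * (D i hi * LinearMap.mulLeft ℚ (xE n ⟨i + 1, hi⟩)
               - LinearMap.mulLeft ℚ (xE n ⟨i + 1, hi⟩) * D i hi) := by
  intro i hi
  obtain ⟨h1, h2, h3, h4, h5⟩ := hσ i hi
  set xi := xE n ⟨i, by omega⟩ with hxi
  set xi' := xE n ⟨i + 1, hi⟩ with hxi'
  set c := xi - xi' with hcdef
  have hc : ∀ t : Pn n, c * t = t * c := fun t => by
    rw [hcdef, sub_mul, mul_sub, xE_comm, xE_comm]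
  have hswap : ∀ a t : Pn n, c * (a * t) = a * (c * t) := fun a t => by
    rw [hc, mul_assoc, ← hc]
  have key : ∀ f : Pn n, c * (D i hi f) = f - σ i hi f := hD i hi
  constructor
  · intro j hj
    refine LinearMap.ext fun f => ?_
    simp only [Module.End.mul_apply, LinearMap.mulLeft_apply]
    apply cancel_left n i hi
    rw [key, map_mul (σ i hi), h5 j hj, hswap, key, mul_sub]
  · refine LinearMap.ext fun f => ?_
    simp only [Module.End.mul_apply, LinearMap.mulLeft_apply, LinearMap.add_apply,
      LinearMap.sub_apply]
    apply cancel_left n i hi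
    rw [key, map_mul (σ i hi), h4, mul_add, hswap, hswap, mul_sub, key, key, hswap, key,
      map_mul (σ i hi), h2, hc, hcdef]
    noncomm_ring
end
end

section
/- Let X be an R-module such that every submodule of X is stable for descending filtrations. Suppose X = A₀ ⊇ A₁ ⊇ ⋯ and X = B₀ ⊇ B₁ ⊇ ⋯ are two chains of submodules with ⋂_i A_i = 0 = ⋂_i B_i, such that every quotient A_i/A_{i+1} and every quotient B_i/B_{i+1} is zero or isomorphic to some S_j, and for every j ∈ J the sets {i : A_i/A_{i+1} ≅ S_j} and {i : B_i/B_{i+1} ≅ S_j} are finite. Then for every j ∈ J these two sets have the same cardinality; that is, the two ℤ-composition series have the same simple factors with the same multiplicities. -/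
/-- The subquotient `A/B` of an ambient module. -/
abbrev quotSub {R X : Type*} [Ring R] [AddCommGroup X] [Module R X]
    (A B : Submodule R X) : Type _ :=
  ↥A ⧸ B.comap A.subtype

/-- A module `Y` is *stable for descending filtrations* if for any two chains of submodules
`Y = C₀ ⊇ C₁ ⊇ ⋯` and `Y = D₀ ⊇ D₁ ⊇ ⋯` with `⋂ᵢ Cᵢ = 0 = ⋂ᵢ Dᵢ`, and for each index `i`,
there exists `m` with `D_m ⊆ C_i`. -/
def StableDesc (R Y : Type*) [Ring R] [AddCommGroup Y] [Module R Y] : Prop :=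
  ∀ C D : ℕ → Submodule R Y, C 0 = ⊤ → D 0 = ⊤ →
    (∀ i, C (i + 1) ≤ C i) → (∀ i, D (i + 1) ≤ D i) →
    (⨅ i, C i) = ⊥ → (⨅ i, D i) = ⊥ →
    ∀ i, ∃ m, D m ≤ C i

section Aux

/-- In a modular lattice, meeting with a fixed element preserves `⩿`. -/
private lemma wcovBy_inf_left_mod {α : Type*} [Lattice α] [IsModularLattice α]
    (a : α) {x y : α} (h : x ⩿ y) : a ⊓ x ⩿ a ⊓ y := by
  refine ⟨inf_le_inf_left a h.le, fun z h1 h2 => ?_⟩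
  have hza : z ≤ a := h2.le.trans inf_le_left
  by_cases hzx : z ≤ x
  · exact h1.not_ge (le_inf hza hzx)
  · have hx : x < x ⊔ z := left_lt_sup.2 hzx
    have hxy : x ⊔ z ≤ y := sup_le h.le (h2.le.trans inf_le_right)
    have hy : x ⊔ z = y := by
      by_contra hne
      exact h.2 hx (lt_of_le_of_ne hxy hne)
    have hxa : x ⊓ a ≤ z := by rw [inf_comm]; exact h1.le
    have : a ⊓ y = z := by
      rw [← hy, inf_comm a (x ⊔ z), sup_comm x z, sup_inf_assoc_of_le x hza,
        sup_eq_left.2 hxa]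
    exact h2.ne this.symm

variable {R X : Type*} [Ring R] [AddCommGroup X] [Module R X]

open Classical in
/-- The number of factors of a composition series isomorphic to a fixed module `T`. -/
noncomputable def scount (T : Type*) [AddCommGroup T] [Module R T]
    (s : CompositionSeries (Submodule R X)) : ℕ :=
  ∑ k : Fin s.length,
    if Nonempty ((quotSub (s k.succ) (s k.castSucc)) ≃ₗ[R] T) then 1 else 0

open Classical in
lemma scount_equiv {T : Type*} [AddCommGroup T] [Module R T]
    {s t : CompositionSeries (Submodule R X)} (h : s.Equivalent t) :
    scount T s = scount T t := by
  obtain ⟨e, he⟩ := h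
  rw [scount, scount, ← Equiv.sum_comp e
    (fun k => if Nonempty ((quotSub (t k.succ) (t k.castSucc)) ≃ₗ[R] T) then 1 else 0)]
  refine Finset.sum_congr rfl fun i _ => ?_
  have f := JordanHolderLattice.Iso.linearEquiv (he i)
  exact if_congr ⟨fun ⟨g⟩ => ⟨f.symm.trans g⟩, fun ⟨g⟩ => ⟨f.trans g⟩⟩ rfl rfl

open Classical in
lemma scount_snoc {T : Type*} [AddCommGroup T] [Module R T]
    (s : CompositionSeries (Submodule R X)) (x : Submodule R X)
    (hx : JordanHolderLattice.IsMaximal s.last x) :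
    scount T (s.snoc x hx) = scount T s +
      (if Nonempty ((quotSub x s.last) ≃ₗ[R] T) then 1 else 0) := by
  show (∑ k : Fin (s.length + 1),
    if Nonempty ((quotSub ((s.snoc x hx) k.succ) ((s.snoc x hx) k.castSucc)) ≃ₗ[R] T)
      then 1 else 0) = _
  rw [Fin.sum_univ_castSucc]
  congr 1
  · refine Finset.sum_congr rfl fun i _ => ?_
    rw [Fin.succ_castSucc]; erw [RelSeries.snoc_castSucc, RelSeries.snoc_castSucc]
  · rw [Fin.succ_last, RelSeries.last_snoc']; erw [RelSeries.snoc_castSucc]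
    rfl

open Classical in
lemma chain_series {T : Type*} [AddCommGroup T] [Module R T] [Nontrivial T] :
    ∀ (n : ℕ) (c : ℕ → Submodule R X), (∀ i, c (i + 1) ⩿ c i) →
      ∃ s : CompositionSeries (Submodule R X), s.head = c n ∧ s.last = c 0 ∧
        scount T s = ∑ i ∈ Finset.range n,
          (if Nonempty ((quotSub (c i) (c (i + 1))) ≃ₗ[R] T) then 1 else 0)
  | 0, c, _ => ⟨RelSeries.singleton _ (c 0), RelSeries.head_singleton _,
      RelSeries.last_singleton _, by simp [scount]; exact fun x => x.elim0⟩
  | (n+1), c, hw => by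
    obtain ⟨s, hh, hl, hc⟩ := chain_series (T := T) n (fun i => c (i + 1)) (fun i => hw (i + 1))
    simp only [Nat.zero_add] at hl
    rcases (hw 0).covBy_or_eq with hcov | heq
    · refine ⟨s.snoc (c 0) (hl ▸ hcov), ?_, ?_, ?_⟩
      · rw [RelSeries.head_snoc, hh]
      · rw [RelSeries.last_snoc]
      · rw [scount_snoc, hc, hl, Finset.sum_range_succ']
    · refine ⟨s, hh, by rw [hl, heq], ?_⟩
      have hps : Subsingleton (quotSub (c 0) (c 1)) :=
        Submodule.Quotient.subsingleton_iff.2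
          (Submodule.comap_subtype_eq_top.2 heq.ge)
      have hno : ¬ Nonempty ((quotSub (c 0) (c 1)) ≃ₗ[R] T) := by
        rintro ⟨g⟩
        exact not_subsingleton T (g.toEquiv.symm.subsingleton)
      rw [hc, Finset.sum_range_succ', if_neg hno, add_zero]

lemma stable_transport (hst : StableDesc R ↥(⊤ : Submodule R X))
    (C D : ℕ → Submodule R X) (hC0 : C 0 = ⊤) (hD0 : D 0 = ⊤)
    (hCd : ∀ i, C (i + 1) ≤ C i) (hDd : ∀ i, D (i + 1) ≤ D i)
    (hCi : (⨅ i, C i) = ⊥) (hDi : (⨅ i, D i) = ⊥) :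
    ∀ n, ∃ m, D m ≤ C n := by
  have key : ∀ (E : ℕ → Submodule R X), E 0 = ⊤ → ((⨅ i, E i) = ⊥) →
      ((E 0).comap (⊤ : Submodule R X).subtype = ⊤) ∧
      (⨅ i, (E i).comap (⊤ : Submodule R X).subtype) = ⊥ := by
    intro E hE0 hEi
    constructor
    · rw [hE0]; simp
    · apply (Submodule.eq_bot_iff _).2
      intro x hx
      have hmem : (x : X) ∈ (⨅ i, E i) := (Submodule.mem_iInf _).2
        (fun i => Submodule.mem_comap.1 ((Submodule.mem_iInf _).1 hx i))
      rw [hEi, Submodule.mem_bot] at hmem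
      exact Subtype.ext hmem
  intro n
  obtain ⟨kC, hkC⟩ := key C hC0 hCi
  obtain ⟨kD, hkD⟩ := key D hD0 hDi
  obtain ⟨m, hm⟩ := hst (fun i => (C i).comap (⊤ : Submodule R X).subtype)
    (fun i => (D i).comap (⊤ : Submodule R X).subtype) kC kD
    (fun i => Submodule.comap_mono (hCd i)) (fun i => Submodule.comap_mono (hDd i))
    hkC hkD n
  refine ⟨m, fun x hx => ?_⟩
  have h2 : (⟨x, trivial⟩ : ↥(⊤ : Submodule R X)) ∈
      (D m).comap (⊤ : Submodule R X).subtype := hx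
  exact hm h2

open Classical in
lemma le_aux {T : Type*} [AddCommGroup T] [Module R T] [Nontrivial T]
    (C D : ℕ → Submodule R X) (hC0 : C 0 = ⊤) (hD0 : D 0 = ⊤)
    (hCw : ∀ i, C (i + 1) ⩿ C i) (hDw : ∀ i, D (i + 1) ⩿ D i)
    (hCfin : {i | Nonempty ((quotSub (C i) (C (i + 1))) ≃ₗ[R] T)}.Finite)
    (hDfin : {i | Nonempty ((quotSub (D i) (D (i + 1))) ≃ₗ[R] T)}.Finite)
    (hcof : ∀ n, ∃ m, D m ≤ C n) :
    {i | Nonempty ((quotSub (C i) (C (i + 1))) ≃ₗ[R] T)}.ncard ≤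
      {i | Nonempty ((quotSub (D i) (D (i + 1))) ≃ₗ[R] T)}.ncard := by
  obtain ⟨bC, hbC⟩ := hCfin.bddAbove
  obtain ⟨bD, hbD⟩ := hDfin.bddAbove
  set NA := bC + 1 with hNAdef
  obtain ⟨m₀, hm₀⟩ := hcof NA
  set m := m₀ + bD + 1 with hmdef
  have hDanti : Antitone D := antitone_nat_of_succ_le (fun i => (hDw i).le)
  have hDmC : D m ≤ C NA := (hDanti (by omega : m₀ ≤ m)).trans hm₀
  set E : ℕ → Submodule R X := fun i => C (min i NA) ⊓ D (i - NA) with hE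
  have hEeq : ∀ i ≤ NA, E i = C i := by
    intro i hi
    rw [hE]; dsimp only
    rw [min_eq_left hi, Nat.sub_eq_zero_of_le hi, hD0, inf_top_eq]
  have hEw : ∀ i, E (i + 1) ⩿ E i := by
    intro i
    rcases lt_or_ge i NA with h | h
    · rw [hEeq i h.le, hEeq (i + 1) h]; exact hCw i
    · have h1 : min i NA = NA := min_eq_right h
      have h2 : min (i + 1) NA = NA := min_eq_right (by omega)
      have h3 : i + 1 - NA = (i - NA) + 1 := by omega
      rw [hE]; dsimp only
      rw [h1, h2, h3]
      exact wcovBy_inf_left_mod _ (hDw (i - NA))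
  obtain ⟨sD, hDh, hDl, hDc⟩ := chain_series (T := T) m D hDw
  obtain ⟨sE, hEh, hEl, hEc⟩ := chain_series (T := T) (NA + m) E hEw
  have hhead : sE.head = sD.head := by
    rw [hEh, hDh]
    show C (min (NA + m) NA) ⊓ D (NA + m - NA) = D m
    rw [min_eq_right (by omega), (by omega : NA + m - NA = m)]
    exact inf_eq_right.2 hDmC
  have hlast : sE.last = sD.last := by
    rw [hEl, hDl, hEeq 0 (Nat.zero_le _), hC0, hD0]
  have hcnt : scount T sE = scount T sD :=
    scount_equiv (CompositionSeries.jordan_holder _ _ hhead hlast)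
  have hCcard : {i | Nonempty ((quotSub (C i) (C (i + 1))) ≃ₗ[R] T)}.ncard
      = ∑ i ∈ Finset.range NA,
        (if Nonempty ((quotSub (C i) (C (i + 1))) ≃ₗ[R] T) then 1 else 0) := by
    have hset : {i | Nonempty ((quotSub (C i) (C (i + 1))) ≃ₗ[R] T)}
        = ↑((Finset.range NA).filter
            fun i => Nonempty ((quotSub (C i) (C (i + 1))) ≃ₗ[R] T)) := by
      ext i
      simp only [Finset.coe_filter, Finset.mem_range, Set.mem_setOf_eq]
      exact ⟨fun h => ⟨by have := hbC h; omega, h⟩, fun h => h.2⟩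
    rw [hset, Set.ncard_coe_finset, Finset.card_filter]
  have hDcard : {i | Nonempty ((quotSub (D i) (D (i + 1))) ≃ₗ[R] T)}.ncard
      = ∑ i ∈ Finset.range m,
        (if Nonempty ((quotSub (D i) (D (i + 1))) ≃ₗ[R] T) then 1 else 0) := by
    have hset : {i | Nonempty ((quotSub (D i) (D (i + 1))) ≃ₗ[R] T)}
        = ↑((Finset.range m).filter
            fun i => Nonempty ((quotSub (D i) (D (i + 1))) ≃ₗ[R] T)) := by
      ext i
      simp only [Finset.coe_filter, Finset.mem_range, Set.mem_setOf_eq]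
      exact ⟨fun h => ⟨by have := hbD h; omega, h⟩, fun h => h.2⟩
    rw [hset, Set.ncard_coe_finset, Finset.card_filter]
  calc {i | Nonempty ((quotSub (C i) (C (i + 1))) ≃ₗ[R] T)}.ncard
      = ∑ i ∈ Finset.range NA,
        (if Nonempty ((quotSub (C i) (C (i + 1))) ≃ₗ[R] T) then 1 else 0) := hCcard
    _ = ∑ i ∈ Finset.range NA,
        (if Nonempty ((quotSub (E i) (E (i + 1))) ≃ₗ[R] T) then 1 else 0) := by
        refine Finset.sum_congr rfl fun i hi => ?_
        have hi' := Finset.mem_range.1 hi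
        rw [hEeq i hi'.le, hEeq (i + 1) hi']
    _ ≤ ∑ i ∈ Finset.range (NA + m),
        (if Nonempty ((quotSub (E i) (E (i + 1))) ≃ₗ[R] T) then 1 else 0) :=
        Finset.sum_le_sum_of_subset (Finset.range_subset_range.2 (by omega))
    _ = scount T sE := hEc.symm
    _ = scount T sD := hcnt
    _ = ∑ i ∈ Finset.range m,
        (if Nonempty ((quotSub (D i) (D (i + 1))) ≃ₗ[R] T) then 1 else 0) := hDc
    _ = {i | Nonempty ((quotSub (D i) (D (i + 1))) ≃ₗ[R] T)}.ncard := hDcard.symm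

end Aux

/-- Let `X` be an `R`-module such that every submodule of `X` is stable for
descending filtrations, and let `(S_j)` be a family of pairwise non-isomorphic simple modules.
Any two descending ℤ-composition series of `X` with factors among the `S_j` and finite
multiplicities have the same simple factors with the same multiplicities. -/
theorem statement15 {R : Type*} [Ring R] {X : Type*} [AddCommGroup X] [Module R X]
    {J : Type*} (S : J → Type*) [∀ j, AddCommGroup (S j)] [∀ j, Module R (S j)]
    (hsimple : ∀ j, IsSimpleModule R (S j))
    (hpair : ∀ j j', j ≠ j' → IsEmpty (S j ≃ₗ[R] S j'))
    (hstable : ∀ Y : Submodule R X, StableDesc R ↥Y)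
    (A B : ℕ → Submodule R X)
    (hA0 : A 0 = ⊤) (hB0 : B 0 = ⊤)
    (hAdesc : ∀ i, A (i + 1) ≤ A i) (hBdesc : ∀ i, B (i + 1) ≤ B i)
    (hAinf : (⨅ i, A i) = ⊥) (hBinf : (⨅ i, B i) = ⊥)
    (hAq : ∀ i, Subsingleton (quotSub (A i) (A (i + 1))) ∨
      ∃ j, Nonempty (quotSub (A i) (A (i + 1)) ≃ₗ[R] S j))
    (hBq : ∀ i, Subsingleton (quotSub (B i) (B (i + 1))) ∨
      ∃ j, Nonempty (quotSub (B i) (B (i + 1)) ≃ₗ[R] S j))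
    (hAfin : ∀ j, {i | Nonempty (quotSub (A i) (A (i + 1)) ≃ₗ[R] S j)}.Finite)
    (hBfin : ∀ j, {i | Nonempty (quotSub (B i) (B (i + 1)) ≃ₗ[R] S j)}.Finite) :
    ∀ j, {i | Nonempty (quotSub (A i) (A (i + 1)) ≃ₗ[R] S j)}.ncard
      = {i | Nonempty (quotSub (B i) (B (i + 1)) ≃ₗ[R] S j)}.ncard := by
  have hAw : ∀ i, A (i + 1) ⩿ A i := by
    intro i
    rcases hAq i with h | ⟨j', ⟨e⟩⟩
    · have hle : A i ≤ A (i + 1) := Submodule.comap_subtype_eq_top.1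
        (Submodule.Quotient.subsingleton_iff.1 h)
      rw [le_antisymm (hAdesc i) hle]
      exact WCovBy.refl _
    · haveI := hsimple j'
      have hs : IsSimpleModule R (quotSub (A i) (A (i + 1))) := IsSimpleModule.congr e
      exact ((covBy_iff_quot_is_simple (hAdesc i)).2 hs).wcovBy
  have hBw : ∀ i, B (i + 1) ⩿ B i := by
    intro i
    rcases hBq i with h | ⟨j', ⟨e⟩⟩
    · have hle : B i ≤ B (i + 1) := Submodule.comap_subtype_eq_top.1
        (Submodule.Quotient.subsingleton_iff.1 h)
      rw [le_antisymm (hBdesc i) hle]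
      exact WCovBy.refl _
    · haveI := hsimple j'
      have hs : IsSimpleModule R (quotSub (B i) (B (i + 1))) := IsSimpleModule.congr e
      exact ((covBy_iff_quot_is_simple (hBdesc i)).2 hs).wcovBy
  have hst := hstable ⊤
  have hcof1 : ∀ n, ∃ m, B m ≤ A n :=
    stable_transport hst A B hA0 hB0 hAdesc hBdesc hAinf hBinf
  have hcof2 : ∀ n, ∃ m, A m ≤ B n :=
    stable_transport hst B A hB0 hA0 hBdesc hAdesc hBinf hAinf
  intro j
  haveI := hsimple j
  haveI : Nontrivial (S j) := IsSimpleModule.nontrivial R (S j)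
  exact le_antisymm
    (le_aux A B hA0 hB0 hAw hBw (hAfin j) (hBfin j) hcof1)
    (le_aux B A hB0 hA0 hBw hAw (hBfin j) (hAfin j) hcof2)
end

section
/- Let X be an R-module such that every subquotient of X is stable for descending filtrations and stable for ascending filtrations. Suppose X = A₀ ⊇ A₁ ⊇ ⋯ is a descending chain of submodules with ⋂_i A_i = 0, and 0 = B₀ ⊆ B₁ ⊆ ⋯ is an ascending chain of submodules with ⋃_i B_i = X, such that every quotient A_i/A_{i+1} and every quotient B_{i+1}/B_i is zero or isomorphic to some S_j, and for every j ∈ J the sets {i : A_i/A_{i+1} ≅ S_j} and {i : B_{i+1}/B_i ≅ S_j} are finite. Then for every j ∈ J these two sets have the same cardinality; that is, the descending and the ascending ℤ-composition series of X have the same simple factors with the same multiplicities. -/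
/-- A module `Y` is *stable for ascending filtrations* if for any two chains
`0 = C₀ ⊆ C₁ ⊆ ⋯ ⊆ Y` and `0 = D₀ ⊆ D₁ ⊆ ⋯ ⊆ Y` with `⋃ᵢ Cᵢ = Y = ⋃ᵢ Dᵢ`, and for each
index `i`, there exists `m` with `D_i ⊆ C_m`. -/
def StableAsc (R Y : Type*) [Ring R] [AddCommGroup Y] [Module R Y] : Prop :=
  ∀ C D : ℕ → Submodule R Y, C 0 = ⊥ → D 0 = ⊥ →
    (∀ i, C i ≤ C (i + 1)) → (∀ i, D i ≤ D (i + 1)) →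
    (⨆ i, C i) = ⊤ → (⨆ i, D i) = ⊤ →
    ∀ i, ∃ m, D i ≤ C m

section Aux
open JordanHolderLattice

variable {R : Type*} [Ring R] {X : Type*} [AddCommGroup X] [Module R X]
  {J : Type*} {S : J → Type*} [∀ j, AddCommGroup (S j)] [∀ j, Module R (S j)]

open Classical in
/-- The number of composition factors of `s` isomorphic to `S j`. -/
noncomputable def cntS (S : J → Type*) [∀ j, AddCommGroup (S j)] [∀ j, Module R (S j)] (j : J)
    (s : CompositionSeries (Submodule R X)) : ℕ :=
  ∑ i : Fin s.length,
    if Nonempty (quotSub (s i.succ) (s (Fin.castSucc i)) ≃ₗ[R] S j) then 1 else 0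

open Classical in
lemma cntS_equiv (j : J) {s t : CompositionSeries (Submodule R X)} (h : s.Equivalent t) :
    cntS S j s = cntS S j t := by
  obtain ⟨e, he⟩ := h
  refine Fintype.sum_equiv e _ _ fun i => ?_
  have f := JordanHolderLattice.Iso.linearEquiv (he i)
  exact if_congr ⟨fun ⟨g⟩ => ⟨f.symm.trans g⟩, fun ⟨g⟩ => ⟨f.trans g⟩⟩ rfl rfl

lemma subsingleton_quotSub_iff {P Q : Submodule R X} (h : P ≤ Q) :
    Subsingleton (quotSub Q P) ↔ P = Q := by
  rw [Submodule.Quotient.subsingleton_iff, Submodule.comap_subtype_eq_top]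
  exact ⟨fun h' => le_antisymm h h', fun h' => h' ▸ le_rfl⟩

lemma not_iso_of_subsingleton (hsimple : ∀ j, IsSimpleModule R (S j)) (j : J)
    {Y : Type*} [AddCommGroup Y] [Module R Y] (h : Subsingleton Y) :
    ¬ Nonempty (Y ≃ₗ[R] S j) := by
  rintro ⟨f⟩
  haveI := hsimple j
  haveI : Nontrivial (S j) := IsSimpleModule.nontrivial R (S j)
  haveI : Nontrivial Y := f.toEquiv.nontrivial
  exact not_subsingleton Y h

lemma transfer (hsimple : ∀ j, IsSimpleModule R (S j))
    {P Q W : Submodule R X} (hPQ : P ≤ Q)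
    (hq : Subsingleton (quotSub Q P) ∨ ∃ j', Nonempty (quotSub Q P ≃ₗ[R] S j')) :
    (P ⊓ W = Q ⊓ W ∨ P ⊓ W ⋖ Q ⊓ W) ∧
    (P ⊓ W = Q ⊓ W ∨ Nonempty (quotSub (Q ⊓ W) (P ⊓ W) ≃ₗ[R] quotSub Q P)) := by
  rcases hq with hss | ⟨j', ⟨f⟩⟩
  · have hPQ' : P = Q := (subsingleton_quotSub_iff hPQ).1 hss
    subst hPQ'
    exact ⟨Or.inl rfl, Or.inl rfl⟩
  · haveI := hsimple j'
    haveI hs : IsSimpleModule R (quotSub Q P) := IsSimpleModule.congr f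
    have hcov : P ⋖ Q := (covBy_iff_quot_is_simple hPQ).2 hs
    rcases hcov.eq_or_eq (le_sup_left : P ≤ P ⊔ (Q ⊓ W))
        (sup_le hPQ inf_le_left) with hP | hQ
    · have hle : Q ⊓ W ≤ P ⊓ W := le_inf (le_sup_right.trans hP.le) inf_le_right
      have heq : P ⊓ W = Q ⊓ W := le_antisymm (inf_le_inf_right W hPQ) hle
      exact ⟨Or.inl heq, Or.inl heq⟩
    · have h1 : (Q ⊓ W) ⊓ P = P ⊓ W := by
        rw [inf_comm, ← inf_assoc, inf_eq_left.2 hPQ]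
      have h2 : (Q ⊓ W) ⊔ P = Q := by rw [sup_comm]; exact hQ
      have e := LinearMap.quotientInfEquivSupQuotient (Q ⊓ W) P
      rw [← Submodule.comap_inf, h1, h2] at e
      haveI hs' : IsSimpleModule R (quotSub (Q ⊓ W) (P ⊓ W)) := IsSimpleModule.congr e
      exact ⟨Or.inr ((covBy_iff_quot_is_simple (inf_le_inf_right W hPQ)).2 hs'),
        Or.inr ⟨e⟩⟩

open Classical in
lemma exists_series (hsimple : ∀ j, IsSimpleModule R (S j)) (j : J)
    (f : ℕ → Submodule R X) :
    ∀ L : ℕ, (∀ i < L, f i = f (i + 1) ∨ f i ⋖ f (i + 1)) →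
    ∃ s : CompositionSeries (Submodule R X), s.head = f 0 ∧ s.last = f L ∧
      cntS S j s = ∑ i ∈ Finset.range L,
        if Nonempty (quotSub (f (i + 1)) (f i) ≃ₗ[R] S j) then 1 else 0 := by
  intro L
  induction L with
  | zero =>
    intro _
    exact ⟨RelSeries.singleton _ (f 0), rfl, rfl, by simp [cntS]; exact fun x => x.elim0⟩
  | succ L ih =>
    intro hstep
    obtain ⟨s, h1, h2, h3⟩ := ih (fun i hi => hstep i (hi.trans (Nat.lt_succ_self L)))
    rcases hstep L (Nat.lt_succ_self L) with heq | hcov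
    · refine ⟨s, h1, h2.trans heq, ?_⟩
      rw [Finset.sum_range_succ, h3, if_neg, add_zero]
      exact not_iso_of_subsingleton hsimple j
        ((subsingleton_quotSub_iff heq.le).2 heq)
    · have hm : IsMaximal s.last (f (L + 1)) := by
        show s.last ⋖ f (L + 1)
        rw [h2]; exact hcov
      refine ⟨s.snoc (f (L + 1)) hm, by simp [h1], by simp, ?_⟩
      rw [Finset.sum_range_succ, ← h3, cntS]
      rw [show (∑ i : Fin (s.snoc (f (L + 1)) hm).length,
          if Nonempty (quotSub ((s.snoc (f (L+1)) hm) i.succ)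
            ((s.snoc (f (L+1)) hm) (Fin.castSucc i)) ≃ₗ[R] S j) then 1 else 0)
        = ∑ i : Fin (s.length + 1),
          if Nonempty (quotSub ((s.snoc (f (L+1)) hm) i.succ)
            ((s.snoc (f (L+1)) hm) (Fin.castSucc i)) ≃ₗ[R] S j) then 1 else 0 from rfl]
      rw [Fin.sum_univ_castSucc]
      congr 1
      · refine Finset.sum_congr rfl fun i _ => ?_
        rw [Fin.succ_castSucc]
        rw [RelSeries.snoc_castSucc]; erw [RelSeries.snoc_castSucc]
      · have hl : (s.snoc (f (L+1)) hm) (Fin.last s.length).succ = f (L + 1) :=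
          RelSeries.last_snoc' _ _ _
        have hc : (s.snoc (f (L+1)) hm) (Fin.castSucc (Fin.last s.length)) = s.last := by
          rw [RelSeries.snoc_castSucc]; rfl
        rw [hl, hc, h2]

lemma exists_disjoint {A : ℕ → Submodule R X} (hA0 : A 0 = ⊤)
    (hAdesc : ∀ i, A (i + 1) ≤ A i) (hAinf : (⨅ i, A i) = ⊥) (W : Submodule R X)
    (hst : StableDesc R (quotSub W ⊥)) : ∃ m, A m ⊓ W = ⊥ := by
  have hbot : (⊥ : Submodule R X).comap W.subtype = ⊥ := by
    simp [Submodule.comap_bot, Submodule.ker_subtype]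
  let e : quotSub W ⊥ ≃ₗ[R] W := Submodule.quotEquivOfEqBot _ hbot
  let ψ : quotSub W ⊥ →ₗ[R] X := W.subtype ∘ₗ e.toLinearMap
  have hinj : Function.Injective ψ := W.injective_subtype.comp e.injective
  set C : ℕ → Submodule R (quotSub W ⊥) := fun k => Submodule.comap ψ (A k) with hC
  have hC0 : C 0 = ⊤ := by simp [hC, hA0]
  have hCd : ∀ k, C (k + 1) ≤ C k := fun k => Submodule.comap_mono (hAdesc k)
  have hCinf : (⨅ k, C k) = ⊥ := by
    rw [eq_bot_iff]
    intro x hx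
    have hxk : ψ x ∈ ⨅ i, A i :=
      Submodule.mem_iInf _ |>.2 fun k => (Submodule.mem_iInf _).1 hx k
    rw [hAinf, Submodule.mem_bot] at hxk
    rw [Submodule.mem_bot]
    exact hinj (by simpa using hxk)
  set D : ℕ → Submodule R (quotSub W ⊥) := fun k => if k = 0 then ⊤ else ⊥ with hD
  have hDd : ∀ i, D (i + 1) ≤ D i := fun i => by simp [hD]
  have hDinf : (⨅ k, D k) = ⊥ := le_antisymm ((iInf_le D 1).trans (by simp [hD])) bot_le
  obtain ⟨m, hm⟩ := hst D C rfl hC0 hDd hCd hDinf hCinf 1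
  have hm' : C m ≤ ⊥ := by simpa [hD] using hm
  refine ⟨m, ?_⟩
  rw [eq_bot_iff]
  rintro x hx
  rw [Submodule.mem_inf] at hx
  have hy : ψ (e.symm ⟨x, hx.2⟩) = x := by show W.subtype (e (e.symm ⟨x, hx.2⟩)) = x; simp
  have hmem : e.symm ⟨x, hx.2⟩ ∈ C m := by
    rw [hC, Submodule.mem_comap, hy]; exact hx.1
  have h0 : e.symm ⟨x, hx.2⟩ = 0 := by simpa using hm' hmem
  rw [Submodule.mem_bot, ← hy, h0, map_zero]

lemma exists_cover {B : ℕ → Submodule R X} (hB0 : B 0 = ⊥)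
    (hBasc : ∀ i, B i ≤ B (i + 1)) (hBsup : (⨆ i, B i) = ⊤) (V : Submodule R X)
    (hst : StableAsc R (quotSub ⊤ V)) : ∃ m, B m ⊔ V = ⊤ := by
  set K := V.comap (⊤ : Submodule R X).subtype with hK
  let φ : X →ₗ[R] quotSub ⊤ V :=
    K.mkQ ∘ₗ (Submodule.topEquiv (R := R) (M := X)).symm.toLinearMap
  have hker : LinearMap.ker φ = V := by
    rw [LinearMap.ker_comp, Submodule.ker_mkQ]
    ext x
    simp [hK]
  have hsurj : Function.Surjective φ :=
    (Submodule.mkQ_surjective K).comp (Submodule.topEquiv (R := R) (M := X)).symm.surjective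
  set C : ℕ → Submodule R (quotSub ⊤ V) := fun k => Submodule.map φ (B k) with hC
  have hC0 : C 0 = ⊥ := by simp [hC, hB0]
  have hCa : ∀ k, C k ≤ C (k + 1) := fun k => Submodule.map_mono (hBasc k)
  have hCsup : (⨆ k, C k) = ⊤ := by
    rw [hC, ← Submodule.map_iSup, hBsup, Submodule.map_top]
    exact LinearMap.range_eq_top.2 hsurj
  set D : ℕ → Submodule R (quotSub ⊤ V) := fun k => if k = 0 then ⊥ else ⊤ with hD
  have hDa : ∀ i, D i ≤ D (i + 1) := fun i => by simp [hD]
  have hDsup : (⨆ k, D k) = ⊤ := le_antisymm le_top ((by simp [hD] : D 1 = ⊤) ▸ le_iSup D 1)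
  obtain ⟨m, hm⟩ := hst C D hC0 rfl hCa hDa hCsup hDsup 1
  have hm' : C m = ⊤ := top_unique (by simpa [hD] using hm)
  refine ⟨m, ?_⟩
  have := congrArg (Submodule.comap φ) hm'
  rw [hC, Submodule.comap_map_eq, hker, Submodule.comap_top] at this
  exact this

end Aux

/-- Let `X` be an `R`-module such that every subquotient of `X` is stable
for descending and ascending filtrations.  A descending ℤ-composition series and an ascending
ℤ-composition series of `X`, with factors among a family `(S_j)` of pairwise non-isomorphic
simple modules and finite multiplicities, have the same simple factors with the same
multiplicities. -/
theorem statement16 {R : Type*} [Ring R] {X : Type*} [AddCommGroup X] [Module R X]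
    {J : Type*} (S : J → Type*) [∀ j, AddCommGroup (S j)] [∀ j, Module R (S j)]
    (hsimple : ∀ j, IsSimpleModule R (S j))
    (hpair : ∀ j j', j ≠ j' → IsEmpty (S j ≃ₗ[R] S j'))
    (hstable : ∀ A B : Submodule R X, B ≤ A →
      StableDesc R (quotSub A B) ∧ StableAsc R (quotSub A B))
    (A B : ℕ → Submodule R X)
    (hA0 : A 0 = ⊤) (hAdesc : ∀ i, A (i + 1) ≤ A i) (hAinf : (⨅ i, A i) = ⊥)
    (hB0 : B 0 = ⊥) (hBasc : ∀ i, B i ≤ B (i + 1)) (hBsup : (⨆ i, B i) = ⊤)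
    (hAq : ∀ i, Subsingleton (quotSub (A i) (A (i + 1))) ∨
      ∃ j, Nonempty (quotSub (A i) (A (i + 1)) ≃ₗ[R] S j))
    (hBq : ∀ i, Subsingleton (quotSub (B (i + 1)) (B i)) ∨
      ∃ j, Nonempty (quotSub (B (i + 1)) (B i) ≃ₗ[R] S j))
    (hAfin : ∀ j, {i | Nonempty (quotSub (A i) (A (i + 1)) ≃ₗ[R] S j)}.Finite)
    (hBfin : ∀ j, {i | Nonempty (quotSub (B (i + 1)) (B i) ≃ₗ[R] S j)}.Finite) :
    ∀ j, {i | Nonempty (quotSub (A i) (A (i + 1)) ≃ₗ[R] S j)}.ncard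
      = {i | Nonempty (quotSub (B (i + 1)) (B i) ≃ₗ[R] S j)}.ncard := by
  classical
  intro j
  have Bmono : Monotone B := monotone_nat_of_le_succ hBasc
  have Amono : Antitone A := antitone_nat_of_succ_le hAdesc
  obtain ⟨N₀, hN₀⟩ := (hAfin j).bddAbove
  set N := N₀ + 1 with hNdef
  obtain ⟨M₀, hM₀⟩ := (hBfin j).bddAbove
  obtain ⟨m₁, hm₁⟩ := exists_cover hB0 hBasc hBsup (A N) ((hstable ⊤ (A N) le_top).2)
  set n := max m₁ (M₀ + 1) with hndef
  have hBn : B n ⊔ A N = ⊤ := by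
    refine top_unique ?_
    calc (⊤ : Submodule R X) = B m₁ ⊔ A N := hm₁.symm
      _ ≤ B n ⊔ A N := sup_le_sup_right (Bmono (le_max_left _ _)) _
  obtain ⟨I₀, hI₀⟩ := exists_disjoint hA0 hAdesc hAinf (B n) ((hstable (B n) ⊥ bot_le).1)
  set I := max I₀ N with hIdef
  have hI : A I ⊓ B n = ⊥ := by
    refine le_antisymm ?_ bot_le
    calc A I ⊓ B n ≤ A I₀ ⊓ B n := inf_le_inf_right _ (Amono (le_max_left _ _))
      _ = ⊥ := hI₀
  have hNI : N ≤ I := le_max_right _ _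
  set c : ℕ → Submodule R X := fun i => A (I - i) ⊓ B n with hcdef
  have steps_c : ∀ i < I, c i = c (i + 1) ∨ c i ⋖ c (i + 1) := by
    intro i hi
    have hk : I - i = (I - (i + 1)) + 1 := by omega
    have e1 : c i = A ((I - (i + 1)) + 1) ⊓ B n := by simp only [hcdef]; rw [hk]
    have e2 : c (i + 1) = A (I - (i + 1)) ⊓ B n := rfl
    rw [e1, e2]
    exact (transfer hsimple (hAdesc (I - (i + 1))) (hAq (I - (i + 1)))).1
  have steps_B : ∀ i < n, B i = B (i + 1) ∨ B i ⋖ B (i + 1) := by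
    intro i _
    rcases hBq i with hss | ⟨j', ⟨f⟩⟩
    · exact Or.inl ((subsingleton_quotSub_iff (hBasc i)).1 hss)
    · haveI := hsimple j'
      exact Or.inr ((covBy_iff_quot_is_simple (hBasc i)).2 (IsSimpleModule.congr f))
  obtain ⟨sc, hc1, hc2, hc3⟩ := exists_series hsimple j c I steps_c
  obtain ⟨sB, hb1, hb2, hb3⟩ := exists_series hsimple j B n steps_B
  have hc1' : sc.head = ⊥ := by
    rw [hc1]; show A (I - 0) ⊓ B n = ⊥; rw [Nat.sub_zero]; exact hI
  have hc2' : sc.last = B n := by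
    rw [hc2]; show A (I - I) ⊓ B n = B n; rw [Nat.sub_self, hA0, top_inf_eq]
  have hb1' : sB.head = ⊥ := by rw [hb1]; exact hB0
  have equiv := CompositionSeries.jordan_holder sc sB (hc1'.trans hb1'.symm)
    (hc2'.trans hb2.symm)
  have hcount : cntS S j sc = cntS S j sB := cntS_equiv j equiv
  -- rewrite the c-sum as the A-sum
  have hsum : (∑ i ∈ Finset.range I,
        if Nonempty (quotSub (c (i + 1)) (c i) ≃ₗ[R] S j) then 1 else 0)
      = ∑ i ∈ Finset.range I,
        (fun k => if Nonempty (quotSub (A k) (A (k + 1)) ≃ₗ[R] S j) then 1 else 0)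
          (I - 1 - i) := by
    refine Finset.sum_congr rfl fun i hi => ?_
    have hiI : i < I := Finset.mem_range.1 hi
    set k := I - 1 - i with hkdef
    have hk : I - i = k + 1 := by omega
    have hk2 : I - (i + 1) = k := by omega
    have e1 : c i = A (k + 1) ⊓ B n := by simp only [hcdef]; rw [hk]
    have e2 : c (i + 1) = A k ⊓ B n := by simp only [hcdef]; rw [hk2]
    rw [e1, e2]
    simp only []
    rcases (transfer hsimple (hAdesc k) (hAq k)).2 with hcol | hne
    · rw [if_neg, if_neg]
      · rintro ⟨g⟩
        have hkN : k < N := by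
          have : k ≤ N₀ := hN₀ ⟨g⟩
          omega
        have hANk : A N ≤ A (k + 1) := Amono hkN
        have hle : A k ≤ A (k + 1) := by
          calc A k = A k ⊓ (B n ⊔ A N) := by rw [hBn, inf_top_eq]
            _ = (A k ⊓ B n) ⊔ A N := (inf_sup_assoc_of_le _ (hANk.trans (hAdesc k))).symm
            _ = (A (k + 1) ⊓ B n) ⊔ A N := by rw [← hcol]
            _ ≤ A (k + 1) := sup_le inf_le_left hANk
        have heq : A (k + 1) = A k := le_antisymm (hAdesc k) hle
        exact not_iso_of_subsingleton hsimple j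
          ((subsingleton_quotSub_iff (hAdesc k)).2 heq) ⟨g⟩
      · exact not_iso_of_subsingleton hsimple j
          ((subsingleton_quotSub_iff (inf_le_inf_right _ (hAdesc k))).2 hcol)
    · obtain ⟨f⟩ := hne
      exact if_congr ⟨fun ⟨g⟩ => ⟨f.symm.trans g⟩, fun ⟨g⟩ => ⟨f.trans g⟩⟩ rfl rfl
  have hsum2 := Finset.sum_range_reflect
    (fun k => if Nonempty (quotSub (A k) (A (k + 1)) ≃ₗ[R] S j) then 1 else 0) I
  -- ncard computations
  have hAcard : {i | Nonempty (quotSub (A i) (A (i + 1)) ≃ₗ[R] S j)}.ncard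
      = ∑ i ∈ Finset.range I,
        if Nonempty (quotSub (A i) (A (i + 1)) ≃ₗ[R] S j) then 1 else 0 := by
    rw [show {i | Nonempty (quotSub (A i) (A (i + 1)) ≃ₗ[R] S j)}
        = ↑((Finset.range I).filter fun i => Nonempty (quotSub (A i) (A (i + 1)) ≃ₗ[R] S j))
      from ?_, Set.ncard_coe_finset, Finset.card_filter]
    ext i
    simp only [Set.mem_setOf_eq, Finset.coe_filter, Finset.mem_range]
    exact ⟨fun h => ⟨by have := hN₀ h; omega, h⟩, fun h => h.2⟩
  have hBcard : {i | Nonempty (quotSub (B (i + 1)) (B i) ≃ₗ[R] S j)}.ncard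
      = ∑ i ∈ Finset.range n,
        if Nonempty (quotSub (B (i + 1)) (B i) ≃ₗ[R] S j) then 1 else 0 := by
    rw [show {i | Nonempty (quotSub (B (i + 1)) (B i) ≃ₗ[R] S j)}
        = ↑((Finset.range n).filter fun i => Nonempty (quotSub (B (i + 1)) (B i) ≃ₗ[R] S j))
      from ?_, Set.ncard_coe_finset, Finset.card_filter]
    ext i
    simp only [Set.mem_setOf_eq, Finset.coe_filter, Finset.mem_range]
    refine ⟨fun h => ⟨?_, h⟩, fun h => h.2⟩
    have := hM₀ h
    have : M₀ + 1 ≤ n := le_max_right _ _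
    omega
  rw [hAcard, hBcard, ← hsum2, ← hsum, ← hc3, hcount, hb3]
end

section
/- Let M ⊆ X be a submodule such that every subquotient of X is stable for descending filtrations. Suppose given: a descending ℤ-composition series X = X₀ ⊇ X₁ ⊇ ⋯ of X with factors among (S_j); a descending ℤ-composition series M = M₀ ⊇ M₁ ⊇ ⋯ of M with factors among (S_j); and that the induced chain X/M ⊇ (X₁ ⊔ M)/M ⊇ (X₂ ⊔ M)/M ⊇ ⋯ is a descending ℤ-composition series of X/M with factors among (S_j). Then for every j ∈ J, the multiplicity of S_j in the series of X equals the multiplicity of S_j in the series of M plus the multiplicity of S_j in the induced series of X/M. -/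
section Aux

open JordanHolderLattice

variable {R : Type*} [Ring R] {X : Type*} [AddCommGroup X] [Module R X]
  {J : Type*} (S : J → Type*) [∀ j, AddCommGroup (S j)] [∀ j, Module R (S j)]

lemma subsingleton_quotSub_of_eq {A B : Submodule R X} (h : A = B) :
    Subsingleton (quotSub A B) := by
  subst h
  rw [Submodule.Quotient.subsingleton_iff, Submodule.comap_subtype_self]

lemma eq_of_subsingleton_quotSub {A B : Submodule R X} (hBA : B ≤ A)
    (h : Subsingleton (quotSub A B)) : A = B := by
  have ht := Submodule.Quotient.subsingleton_iff.mp h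
  refine le_antisymm (fun x hx => ?_) hBA
  have : (⟨x, hx⟩ : ↥A) ∈ (⊤ : Submodule R ↥A) := trivial
  rw [← ht] at this
  exact this

lemma not_nonempty_equiv_of_subsingleton {j : J} (hj : IsSimpleModule R (S j))
    {F : Type*} [AddCommGroup F] [Module R F] (hF : Subsingleton F) :
    ¬ Nonempty (F ≃ₗ[R] S j) := by
  rintro ⟨g⟩
  haveI := hj
  have hnt := IsSimpleModule.nontrivial R (S j)
  obtain ⟨x, y, hxy⟩ := hnt
  exact hxy (by rw [← g.apply_symm_apply x, ← g.apply_symm_apply y,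
    Subsingleton.elim (g.symm x) (g.symm y)])

end Aux

section Mcount

open JordanHolderLattice

variable {R : Type*} [Ring R] {X : Type*} [AddCommGroup X] [Module R X]
  {J : Type*} (S : J → Type*) [∀ j, AddCommGroup (S j)] [∀ j, Module R (S j)]

open scoped Classical in
/-- number of factors of a composition series isomorphic to `S j` -/
noncomputable def mcount (j : J) (s : CompositionSeries (Submodule R X)) : ℕ :=
  ∑ i : Fin s.length,
    if Nonempty (quotSub (s i.succ) (s i.castSucc) ≃ₗ[R] S j) then 1 else 0

lemma mcount_congr {s t : CompositionSeries (Submodule R X)}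
    (h : s.Equivalent t) (j : J) : mcount S j s = mcount S j t := by
  classical
  obtain ⟨e, he⟩ := h
  unfold mcount
  refine Fintype.sum_equiv e _ _ fun i => ?_
  have hi : Nonempty ((quotSub (s i.succ) (s i.castSucc)) ≃ₗ[R]
      (quotSub (t (e i).succ) (t (e i).castSucc))) := ⟨JordanHolderLattice.Iso.linearEquiv (he i)⟩
  obtain ⟨f⟩ := hi
  by_cases hP : Nonempty (quotSub (s i.succ) (s i.castSucc) ≃ₗ[R] S j)
  · rw [if_pos hP, if_pos ⟨f.symm.trans hP.some⟩]
  · rw [if_neg hP, if_neg (fun ⟨g⟩ => hP ⟨f.trans g⟩)]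

open scoped Classical in
lemma mcount_snoc (j : J) (s : CompositionSeries (Submodule R X))
    (A B : Submodule R X) (h : IsMaximal s.last A) (hB : s.last = B) :
    mcount S j (s.snoc A h) = mcount S j s +
      (if Nonempty (quotSub A B ≃ₗ[R] S j) then 1 else 0) := by
  classical
  subst hB
  unfold mcount
  show (∑ i : Fin (s.length + 1),
      if Nonempty (quotSub ((s.snoc A h) i.succ) ((s.snoc A h) i.castSucc) ≃ₗ[R] S j)
      then 1 else 0) = _
  rw [Fin.sum_univ_castSucc]
  congr 1
  · refine Finset.sum_congr rfl fun i _ => ?_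
    have h1 : (s.snoc A h) (Fin.castSucc i).succ = s i.succ := by
      rw [Fin.succ_castSucc]
      exact RelSeries.snoc_castSucc _ _ _ _
    have h2 : (s.snoc A h) (Fin.castSucc (Fin.castSucc i)) = s (Fin.castSucc i) :=
      RelSeries.snoc_castSucc _ _ _ _
    erw [h1, h2]
  · have h1 : (s.snoc A h) (Fin.last s.length).succ = A := by
      rw [Fin.succ_last]
      exact RelSeries.last_snoc' _ _ _
    have h2 : (s.snoc A h) (Fin.castSucc (Fin.last s.length)) = s.last :=
      RelSeries.snoc_castSucc _ _ _ _
    erw [h1, h2]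

lemma mcount_singleton (j : J) (A : Submodule R X) :
    mcount S j (RelSeries.singleton _ A) = 0 := by
  simp [mcount]
  exact fun x => Fin.elim0 x

end Mcount

section Chain

open JordanHolderLattice

variable {R : Type*} [Ring R] {X : Type*} [AddCommGroup X] [Module R X]
  {J : Type*} (S : J → Type*) [∀ j, AddCommGroup (S j)] [∀ j, Module R (S j)]

lemma covby_of_simple {A B : Submodule R X} (hBA : B ≤ A)
    (h : IsSimpleModule R (quotSub A B)) : B ⋖ A :=
  (covBy_iff_quot_is_simple hBA).mpr h

open scoped Classical in
lemma chain_extend (hs : ∀ j, IsSimpleModule R (S j)) (f : ℕ → Submodule R X)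
    (hdesc : ∀ i, f (i + 1) ≤ f i)
    (hfac : ∀ i, Subsingleton (quotSub (f i) (f (i + 1))) ∨
      ∃ j, Nonempty (quotSub (f i) (f (i + 1)) ≃ₗ[R] S j)) :
    ∀ (n : ℕ) (s : CompositionSeries (Submodule R X)), s.last = f n →
      ∃ t : CompositionSeries (Submodule R X), t.head = s.head ∧ t.last = f 0 ∧
        ∀ j, mcount S j t = mcount S j s +
          ∑ i ∈ Finset.range n,
            (if Nonempty (quotSub (f i) (f (i + 1)) ≃ₗ[R] S j) then 1 else 0) := by
  intro n
  induction n with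
  | zero => exact fun s hl => ⟨s, rfl, hl, by simp⟩
  | succ n ih =>
    intro s hl
    by_cases heq : f n = f (n + 1)
    · obtain ⟨t, h1, h2, h3⟩ := ih s (hl.trans heq.symm)
      refine ⟨t, h1, h2, fun j => ?_⟩
      rw [h3 j, Finset.sum_range_succ]
      have hns : ¬ Nonempty (quotSub (f n) (f (n + 1)) ≃ₗ[R] S j) :=
        not_nonempty_equiv_of_subsingleton S (hs j) (subsingleton_quotSub_of_eq heq)
      rw [if_neg hns]
      omega
    · have hsimp : IsSimpleModule R (quotSub (f n) (f (n + 1))) := by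
        rcases hfac n with hss | ⟨j0, ⟨g⟩⟩
        · exact absurd (eq_of_subsingleton_quotSub (hdesc n) hss) heq
        · haveI := hs j0
          exact IsSimpleModule.congr g
      have hcov : f (n + 1) ⋖ f n := covby_of_simple (hdesc n) hsimp
      have hmax : IsMaximal s.last (f n) := by rw [hl]; exact hcov
      obtain ⟨t, h1, h2, h3⟩ := ih (s.snoc (f n) hmax) (RelSeries.last_snoc _ _ _)
      refine ⟨t, by rwa [RelSeries.head_snoc] at h1, h2, fun j => ?_⟩
      rw [h3 j, mcount_snoc S j s (f n) (f (n + 1)) hmax hl, Finset.sum_range_succ]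
      omega

end Chain

section Exists

open JordanHolderLattice

variable {R : Type*} [Ring R] {X : Type*} [AddCommGroup X] [Module R X]

lemma exists_series_to_mid :
    ∀ (n : ℕ) (s : CompositionSeries (Submodule R X)), s.length = n →
      ∀ B : Submodule R X, s.head ≤ B → B ≤ s.last →
      ∃ t : CompositionSeries (Submodule R X), t.head = s.head ∧ t.last = B := by
  intro n
  induction n with
  | zero =>
    intro s hn B h1 h2
    have hle : s.last = s.head := by
      show s (Fin.last _) = s 0
      congr 1
      ext
      simp [hn]
    have hBe : B = s.head := le_antisymm (hle ▸ h2) h1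
    exact ⟨RelSeries.singleton _ B, by simp [hBe], by simp⟩
  | succ n ih =>
    intro s hn B h1 h2
    have h0 : 0 < s.length := by omega
    have hmax := CompositionSeries.isMaximal_eraseLast_last h0
    have hlen : s.eraseLast.length = n := by
      show s.length - 1 = n
      omega
    by_cases hBC : B ≤ s.eraseLast.last
    · obtain ⟨t, ht1, ht2⟩ := ih s.eraseLast hlen B
        (by rwa [RelSeries.head_eraseLast]) hBC
      exact ⟨t, by rwa [RelSeries.head_eraseLast] at ht1, ht2⟩
    · have hcov : s.eraseLast.last ⋖ s.last := hmax
      have hsup : B ⊔ s.eraseLast.last = s.last := by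
        have hle : B ⊔ s.eraseLast.last ≤ s.last :=
          sup_le h2 (CompositionSeries.last_eraseLast_le s)
        rcases hcov.wcovBy.eq_or_eq le_sup_right hle with h | h
        · exact absurd (le_sup_left.trans h.le) hBC
        · exact h
      have hcov2 : B ⊓ s.eraseLast.last ⋖ B :=
        inf_covBy_of_covBy_sup_right (by rw [hsup]; exact hcov)
      have hhead2 : s.eraseLast.head ≤ B ⊓ s.eraseLast.last :=
        le_inf (by rwa [RelSeries.head_eraseLast])
          (CompositionSeries.head_le_of_mem (RelSeries.last_mem _))
      obtain ⟨t, ht1, ht2⟩ := ih s.eraseLast hlen (B ⊓ s.eraseLast.last) hhead2 inf_le_right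
      refine ⟨t.snoc B (by rw [ht2]; exact hcov2), ?_, by simp⟩
      rw [RelSeries.head_snoc, ht1, RelSeries.head_eraseLast]

end Exists

section Count

open JordanHolderLattice

variable {R : Type*} [Ring R] {X : Type*} [AddCommGroup X] [Module R X]
  {J : Type*} (S : J → Type*) [∀ j, AddCommGroup (S j)] [∀ j, Module R (S j)]

open scoped Classical in
lemma ncard_eq_sum_range {P : ℕ → Prop} (m : ℕ) (h : ∀ i, m ≤ i → ¬ P i) :
    {i | P i}.ncard = ∑ i ∈ Finset.range m, (if P i then 1 else 0) := by
  have hset : {i | P i} = ↑((Finset.range m).filter P) := by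
    ext i
    simp only [Finset.coe_filter, Finset.mem_range, Set.mem_setOf_eq]
    exact ⟨fun h' => ⟨by by_contra hc; exact h i (le_of_not_gt hc) h', h'⟩, fun h' => h'.2⟩
  rw [hset, Set.ncard_coe_finset, Finset.card_filter]

lemma exists_bound {P : ℕ → Prop} (h : {i | P i}.Finite) :
    ∃ m, ∀ i, m ≤ i → ¬ P i := by
  obtain ⟨m, hm⟩ := h.bddAbove
  exact ⟨m + 1, fun i hi hP => by have := hm hP; omega⟩

open scoped Classical in
lemma count_le (hs : ∀ j, IsSimpleModule R (S j))
    (C D : ℕ → Submodule R X) (h0 : C 0 = D 0)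
    (hC : ∀ i, C (i + 1) ≤ C i) (hD : ∀ i, D (i + 1) ≤ D i)
    (hCq : ∀ i, Subsingleton (quotSub (C i) (C (i + 1))) ∨
      ∃ j, Nonempty (quotSub (C i) (C (i + 1)) ≃ₗ[R] S j))
    (hDq : ∀ i, Subsingleton (quotSub (D i) (D (i + 1))) ∨
      ∃ j, Nonempty (quotSub (D i) (D (i + 1)) ≃ₗ[R] S j))
    (j : J)
    (hCfin : {i | Nonempty (quotSub (C i) (C (i + 1)) ≃ₗ[R] S j)}.Finite)
    (hDfin : {i | Nonempty (quotSub (D i) (D (i + 1)) ≃ₗ[R] S j)}.Finite)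
    (hcof : ∀ i, ∃ k, C k ≤ D i) :
    {i | Nonempty (quotSub (D i) (D (i + 1)) ≃ₗ[R] S j)}.ncard ≤
      {i | Nonempty (quotSub (C i) (C (i + 1)) ≃ₗ[R] S j)}.ncard := by
  have hCanti : Antitone C := antitone_nat_of_succ_le hC
  have hDanti : Antitone D := antitone_nat_of_succ_le hD
  obtain ⟨NC, hNC⟩ := exists_bound hCfin
  obtain ⟨ND, hND⟩ := exists_bound hDfin
  obtain ⟨k0, hk0⟩ := hcof ND
  set k := max k0 NC with hk
  have hkD : C k ≤ D ND := le_trans (hCanti (le_max_left _ _)) hk0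
  obtain ⟨s1, hs1h, hs1l, hs1c⟩ :=
    chain_extend S hs C hC hCq k (RelSeries.singleton _ (C k)) (by simp)
  obtain ⟨u, hu1, hu2⟩ := exists_series_to_mid s1.length s1 rfl (D ND)
    (by rw [hs1h]; simpa using hkD)
    (by rw [hs1l, h0]; exact hDanti (Nat.zero_le _))
  obtain ⟨t, ht1, ht2, htc⟩ := chain_extend S hs D hD hDq ND u hu2
  have heqv := CompositionSeries.jordan_holder s1 t
    (by rw [ht1, hu1]) (by rw [ht2, hs1l, h0])
  have hcnt := mcount_congr S heqv j
  rw [hs1c j, htc j, mcount_singleton] at hcnt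
  rw [ncard_eq_sum_range ND hND,
    ncard_eq_sum_range k (fun i hi => hNC i (le_trans (le_max_right _ _) hi))]
  omega

open scoped Classical in
lemma count_eq (hs : ∀ j, IsSimpleModule R (S j))
    (C D : ℕ → Submodule R X) (h0 : C 0 = D 0)
    (hC : ∀ i, C (i + 1) ≤ C i) (hD : ∀ i, D (i + 1) ≤ D i)
    (hCq : ∀ i, Subsingleton (quotSub (C i) (C (i + 1))) ∨
      ∃ j, Nonempty (quotSub (C i) (C (i + 1)) ≃ₗ[R] S j))
    (hDq : ∀ i, Subsingleton (quotSub (D i) (D (i + 1))) ∨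
      ∃ j, Nonempty (quotSub (D i) (D (i + 1)) ≃ₗ[R] S j))
    (j : J)
    (hCfin : {i | Nonempty (quotSub (C i) (C (i + 1)) ≃ₗ[R] S j)}.Finite)
    (hDfin : {i | Nonempty (quotSub (D i) (D (i + 1)) ≃ₗ[R] S j)}.Finite)
    (hcof1 : ∀ i, ∃ k, C k ≤ D i) (hcof2 : ∀ i, ∃ k, D k ≤ C i) :
    {i | Nonempty (quotSub (C i) (C (i + 1)) ≃ₗ[R] S j)}.ncard =
      {i | Nonempty (quotSub (D i) (D (i + 1)) ≃ₗ[R] S j)}.ncard :=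
  le_antisymm
    (count_le S hs D C h0.symm hD hC hDq hCq j hDfin hCfin hcof2)
    (count_le S hs C D h0 hC hD hCq hDq j hCfin hDfin hcof1)

end Count


section Cofinal

variable {R : Type*} [Ring R] {X : Type*} [AddCommGroup X] [Module R X]

lemma cofinal_of_stable (M : Submodule R X) (hst : StableDesc R (quotSub M ⊥))
    (C D : ℕ → Submodule R X) (hC0 : C 0 = M) (hD0 : D 0 = M)
    (hC : ∀ i, C (i + 1) ≤ C i) (hD : ∀ i, D (i + 1) ≤ D i)
    (hCinf : (⨅ i, C i) = ⊥) (hDinf : (⨅ i, D i) = ⊥) :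
    ∀ i, ∃ m, D m ≤ C i := by
  have hbot : ((⊥ : Submodule R X).comap M.subtype) = ⊥ := by
    rw [Submodule.comap_bot, Submodule.ker_subtype]
  let e : (↥M) ≃ₗ[R] quotSub M ⊥ :=
    (Submodule.quotEquivOfEqBot _ hbot).symm
  let ψ : Submodule R ↥M ≃o Submodule R (quotSub M ⊥) := Submodule.orderIsoMapComap e
  have key : ∀ (F : ℕ → Submodule R X), F 0 = M → (∀ i, F (i + 1) ≤ F i) →
      (⨅ i, F i) = ⊥ →
      (fun i => ψ ((F i).comap M.subtype)) 0 = ⊤ ∧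
      (∀ i, ψ ((F (i + 1)).comap M.subtype) ≤ ψ ((F i).comap M.subtype)) ∧
      (⨅ i, ψ ((F i).comap M.subtype)) = ⊥ := by
    intro F h0 hstep hinf
    refine ⟨?_, fun i => ψ.le_iff_le.mpr (Submodule.comap_mono (hstep i)), ?_⟩
    · show ψ ((F 0).comap M.subtype) = ⊤
      rw [h0, Submodule.comap_subtype_self]
      exact ψ.map_top
    · rw [← ψ.map_iInf, ← Submodule.comap_iInf, hinf, congrArg ψ hbot]
      exact ψ.map_bot
  obtain ⟨hC'0, hC'step, hC'inf⟩ := key C hC0 hC hCinf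
  obtain ⟨hD'0, hD'step, hD'inf⟩ := key D hD0 hD hDinf
  intro i
  obtain ⟨m, hm⟩ := hst _ _ hC'0 hD'0 hC'step hD'step hC'inf hD'inf i
  refine ⟨m, ?_⟩
  have h1 : (D m).comap M.subtype ≤ (C i).comap M.subtype := ψ.le_iff_le.mp hm
  have h2 := Submodule.map_mono (f := M.subtype) h1
  rw [Submodule.map_comap_subtype, Submodule.map_comap_subtype] at h2
  have hDM : D m ≤ M := hD0 ▸ (antitone_nat_of_succ_le hD) (Nat.zero_le m)
  calc D m = M ⊓ D m := (inf_eq_right.mpr hDM).symm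
    _ ≤ M ⊓ C i := h2
    _ ≤ C i := inf_le_right

end Cofinal

section Local

variable {R : Type*} [Ring R] {X : Type*} [AddCommGroup X] [Module R X]
  {J : Type*} (S : J → Type*) [∀ j, AddCommGroup (S j)] [∀ j, Module R (S j)]

lemma quot_inf_iso (M : Submodule R X) {A B : Submodule R X} (hBA : B ≤ A)
    (hsup : (A ⊓ M) ⊔ B = A) :
    Nonempty (quotSub (A ⊓ M) (B ⊓ M) ≃ₗ[R] quotSub A B) := by
  have h1 : (A ⊓ M) ⊓ B = B ⊓ M := by
    rw [inf_assoc, inf_comm M B, ← inf_assoc, inf_eq_right.mpr hBA]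
  have e := LinearMap.quotientInfEquivSupQuotient (A ⊓ M) B
  rw [← Submodule.comap_inf] at e
  rw [h1, hsup] at e
  exact ⟨e⟩

lemma map_eq_of_sup (M : Submodule R X) {A B : Submodule R X}
    (hsup : (A ⊓ M) ⊔ B = A) :
    Submodule.map M.mkQ A = Submodule.map M.mkQ B := by
  conv_lhs => rw [← hsup]
  rw [Submodule.map_sup]
  have hb : Submodule.map M.mkQ (A ⊓ M) = ⊥ := by
    rw [eq_bot_iff, Submodule.map_le_iff_le_comap, Submodule.comap_bot, Submodule.ker_mkQ]
    exact inf_le_right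
  rw [hb, bot_sup_eq]

lemma quot_map_iso (M : Submodule R X) {A B : Submodule R X} (hBA : B ≤ A)
    (hMB : A ⊓ M ≤ B) :
    Nonempty (quotSub (Submodule.map M.mkQ A) (Submodule.map M.mkQ B) ≃ₗ[R] quotSub A B) := by
  set Ab := Submodule.map M.mkQ A with hAb
  set Bb := Submodule.map M.mkQ B with hBb
  let f1 : ↥A →ₗ[R] ↥Ab :=
    LinearMap.codRestrict Ab (M.mkQ ∘ₗ A.subtype)
      (fun a => Submodule.mem_map_of_mem a.2)
  let g : ↥A →ₗ[R] quotSub Ab Bb := (Bb.comap Ab.subtype).mkQ ∘ₗ f1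
  have hgsurj : Function.Surjective g := by
    rintro x
    obtain ⟨⟨y, hy⟩, rfl⟩ := Submodule.mkQ_surjective _ x
    obtain ⟨a, ha, rfl⟩ := hy
    exact ⟨⟨a, ha⟩, rfl⟩
  have hker : LinearMap.ker g = B.comap A.subtype := by
    ext a
    have hg : (g a = 0) ↔ f1 a ∈ Bb.comap Ab.subtype := by
      show ((Bb.comap Ab.subtype).mkQ (f1 a) = 0) ↔ _
      rw [Submodule.mkQ_apply, Submodule.Quotient.mk_eq_zero]
    have hsub : (Ab.subtype (f1 a) : X ⧸ M) = M.mkQ (a : X) := rfl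
    constructor
    · intro hx
      have hx' : M.mkQ (a : X) ∈ Bb := by
        rw [← hsub]
        exact hg.mp (LinearMap.mem_ker.mp hx)
      obtain ⟨b, hb, hab⟩ := hx'
      have hba : (b : X) - (a : X) ∈ M := (Submodule.Quotient.eq M).mp hab
      have haBM : (a : X) ∈ B ⊔ M := by
        have : (a : X) = b + -((b : X) - (a : X)) := by abel
        rw [this]
        exact Submodule.add_mem_sup hb (neg_mem hba)
      have hmod : (B ⊔ M) ⊓ A = B ⊔ (M ⊓ A) := sup_inf_assoc_of_le M hBA
      have : (a : X) ∈ B ⊔ (M ⊓ A) := hmod ▸ Set.mem_sep haBM a.2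
      have hBMle : M ⊓ A ≤ B := by rwa [inf_comm]
      exact Submodule.mem_comap.mpr ((sup_eq_left.mpr hBMle) ▸ this)
    · intro hb
      rw [LinearMap.mem_ker, hg]
      exact Submodule.mem_comap.mpr (by rw [hsub]; exact ⟨(a : X), hb, rfl⟩)
  have e0 := g.quotKerEquivOfSurjective hgsurj
  rw [hker] at e0
  exact ⟨e0.symm⟩

open JordanHolderLattice in
lemma local_tri (hs : ∀ j, IsSimpleModule R (S j)) (M : Submodule R X)
    {A B : Submodule R X} (hBA : B ≤ A)
    (hq : Subsingleton (quotSub A B) ∨ ∃ j0, Nonempty (quotSub A B ≃ₗ[R] S j0)) :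
    (A = B)
    ∨ ((∃ j0, Nonempty (quotSub A B ≃ₗ[R] S j0)) ∧
        Nonempty (quotSub (A ⊓ M) (B ⊓ M) ≃ₗ[R] quotSub A B) ∧
        Submodule.map M.mkQ A = Submodule.map M.mkQ B)
    ∨ ((∃ j0, Nonempty (quotSub A B ≃ₗ[R] S j0)) ∧
        (A ⊓ M = B ⊓ M) ∧
        Nonempty (quotSub (Submodule.map M.mkQ A) (Submodule.map M.mkQ B) ≃ₗ[R] quotSub A B)) := by
  rcases hq with hss | ⟨j0, ⟨g⟩⟩
  · exact Or.inl (eq_of_subsingleton_quotSub hBA hss)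
  · haveI := hs j0
    have hsimpleq : IsSimpleModule R (quotSub A B) := IsSimpleModule.congr g
    have hcov : B ⋖ A := covby_of_simple hBA hsimpleq
    have hmid : B ≤ (A ⊓ M) ⊔ B := le_sup_right
    have hmid2 : (A ⊓ M) ⊔ B ≤ A := sup_le inf_le_left hBA
    rcases hcov.wcovBy.eq_or_eq hmid hmid2 with hc | hc
    · refine Or.inr (Or.inr ⟨⟨j0, ⟨g⟩⟩, ?_, ?_⟩)
      · have hMB : A ⊓ M ≤ B := le_sup_left.trans hc.le
        exact le_antisymm (le_inf hMB inf_le_right) (inf_le_inf_right M hBA)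
      · exact quot_map_iso M hBA (le_sup_left.trans hc.le)
    · exact Or.inr (Or.inl ⟨⟨j0, ⟨g⟩⟩, quot_inf_iso M hBA hc, map_eq_of_sup M hc⟩)

end Local

/-- Let `M ⊆ X` with every subquotient of `X` stable for descending
filtrations.  Given descending ℤ-composition series of `X` and of `M` (with factors among a
family `(S_j)` of pairwise non-isomorphic simple modules), such that the induced chain
`X/M ⊇ (X₁ ⊔ M)/M ⊇ ⋯` is a descending ℤ-composition series of `X/M`, the multiplicity of
each `S_j` in the series of `X` equals its multiplicity in the series of `M` plus its
multiplicity in the induced series of `X/M`. -/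
theorem statement18 {R : Type*} [Ring R] {X : Type*} [AddCommGroup X] [Module R X]
    {J : Type*} (S : J → Type*) [∀ j, AddCommGroup (S j)] [∀ j, Module R (S j)]
    (hsimple : ∀ j, IsSimpleModule R (S j))
    (hpair : ∀ j j', j ≠ j' → IsEmpty (S j ≃ₗ[R] S j'))
    (hstable : ∀ A B : Submodule R X, B ≤ A → StableDesc R (quotSub A B))
    (M : Submodule R X)
    (cX : ℕ → Submodule R X)
    (hX0 : cX 0 = ⊤) (hXdesc : ∀ i, cX (i + 1) ≤ cX i) (hXinf : (⨅ i, cX i) = ⊥)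
    (hXq : ∀ i, Subsingleton (quotSub (cX i) (cX (i + 1))) ∨
      ∃ j, Nonempty (quotSub (cX i) (cX (i + 1)) ≃ₗ[R] S j))
    (hXfin : ∀ j, {i | Nonempty (quotSub (cX i) (cX (i + 1)) ≃ₗ[R] S j)}.Finite)
    (cM : ℕ → Submodule R X)
    (hM0 : cM 0 = M) (hMdesc : ∀ i, cM (i + 1) ≤ cM i) (hMinf : (⨅ i, cM i) = ⊥)
    (hMq : ∀ i, Subsingleton (quotSub (cM i) (cM (i + 1))) ∨
      ∃ j, Nonempty (quotSub (cM i) (cM (i + 1)) ≃ₗ[R] S j))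
    (hMfin : ∀ j, {i | Nonempty (quotSub (cM i) (cM (i + 1)) ≃ₗ[R] S j)}.Finite)
    (hQinf : (⨅ i, Submodule.map M.mkQ (cX i)) = ⊥)
    (hQq : ∀ i, Subsingleton
        (quotSub (Submodule.map M.mkQ (cX i)) (Submodule.map M.mkQ (cX (i + 1)))) ∨
      ∃ j, Nonempty
        (quotSub (Submodule.map M.mkQ (cX i)) (Submodule.map M.mkQ (cX (i + 1))) ≃ₗ[R] S j))
    (hQfin : ∀ j, {i | Nonempty
        (quotSub (Submodule.map M.mkQ (cX i)) (Submodule.map M.mkQ (cX (i + 1)))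
          ≃ₗ[R] S j)}.Finite) :
    ∀ j, {i | Nonempty (quotSub (cX i) (cX (i + 1)) ≃ₗ[R] S j)}.ncard
      = {i | Nonempty (quotSub (cM i) (cM (i + 1)) ≃ₗ[R] S j)}.ncard
        + {i | Nonempty
            (quotSub (Submodule.map M.mkQ (cX i)) (Submodule.map M.mkQ (cX (i + 1)))
              ≃ₗ[R] S j)}.ncard := by
  classical
  have hstM : StableDesc R (quotSub M ⊥) := hstable M ⊥ bot_le
  set C' : ℕ → Submodule R X := fun i => cX i ⊓ M with hC'def
  have hC'0 : C' 0 = M := by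
    show cX 0 ⊓ M = M
    rw [hX0, top_inf_eq]
  have hC'desc : ∀ i, C' (i + 1) ≤ C' i := fun i => inf_le_inf_right M (hXdesc i)
  have hC'inf : (⨅ i, C' i) = ⊥ := le_bot_iff.mp
    (by rw [← hXinf]; exact iInf_mono fun i => inf_le_left)
  have tri := fun i => local_tri S hsimple M (hXdesc i) (hXq i)
  have hC'q : ∀ i, Subsingleton (quotSub (C' i) (C' (i + 1))) ∨
      ∃ j0, Nonempty (quotSub (C' i) (C' (i + 1)) ≃ₗ[R] S j0) := by
    intro i
    rcases tri i with hc | ⟨⟨j0, ⟨g0⟩⟩, ⟨gC⟩, _⟩ | ⟨_, hC'eq, _⟩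
    · exact Or.inl (subsingleton_quotSub_of_eq (show cX i ⊓ M = cX (i + 1) ⊓ M by rw [hc]))
    · exact Or.inr ⟨j0, ⟨gC.trans g0⟩⟩
    · exact Or.inl (subsingleton_quotSub_of_eq hC'eq)
  intro j
  -- the three predicates at level i
  set P : ℕ → Prop := fun i => Nonempty (quotSub (cX i) (cX (i + 1)) ≃ₗ[R] S j) with hP
  set Mp : ℕ → Prop := fun i => Nonempty (quotSub (C' i) (C' (i + 1)) ≃ₗ[R] S j) with hMp
  set Qp : ℕ → Prop := fun i => Nonempty
    (quotSub (Submodule.map M.mkQ (cX i)) (Submodule.map M.mkQ (cX (i + 1))) ≃ₗ[R] S j) with hQp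
  have key : ∀ i, (P i ↔ (Mp i ∨ Qp i)) ∧ ¬ (Mp i ∧ Qp i) := by
    intro i
    rcases tri i with hc | ⟨_, ⟨gC⟩, hmapeq⟩ | ⟨_, hC'eq, ⟨gQ⟩⟩
    · have hPx : ¬ P i :=
        not_nonempty_equiv_of_subsingleton S (hsimple j) (subsingleton_quotSub_of_eq hc)
      have hMx : ¬ Mp i :=
        not_nonempty_equiv_of_subsingleton S (hsimple j)
          (subsingleton_quotSub_of_eq (show cX i ⊓ M = cX (i + 1) ⊓ M by rw [hc]))
      have hQx : ¬ Qp i :=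
        not_nonempty_equiv_of_subsingleton S (hsimple j)
          (subsingleton_quotSub_of_eq (by rw [hc]))
      exact ⟨⟨fun h => absurd h hPx, fun h => h.elim (absurd · hMx) (absurd · hQx)⟩,
        fun h => hMx h.1⟩
    · have hQx : ¬ Qp i :=
        not_nonempty_equiv_of_subsingleton S (hsimple j) (subsingleton_quotSub_of_eq hmapeq)
      have hPM : P i ↔ Mp i := ⟨fun ⟨h⟩ => ⟨gC.trans h⟩, fun ⟨h⟩ => ⟨gC.symm.trans h⟩⟩
      exact ⟨⟨fun hp => Or.inl (hPM.mp hp), fun h => h.elim hPM.mpr (absurd · hQx)⟩,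
        fun h => hQx h.2⟩
    · have hMx : ¬ Mp i :=
        not_nonempty_equiv_of_subsingleton S (hsimple j) (subsingleton_quotSub_of_eq hC'eq)
      have hPQ : P i ↔ Qp i := ⟨fun ⟨h⟩ => ⟨gQ.trans h⟩, fun ⟨h⟩ => ⟨gQ.symm.trans h⟩⟩
      exact ⟨⟨fun hp => Or.inr (hPQ.mp hp), fun h => h.elim (absurd · hMx) hPQ.mpr⟩,
        fun h => hMx h.1⟩
  have hsetEq : {i | P i} = {i | Mp i} ∪ {i | Qp i} := Set.ext fun i => (key i).1
  have hdisj : Disjoint {i | Mp i} {i | Qp i} :=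
    Set.disjoint_left.mpr fun i hm hq => (key i).2 ⟨hm, hq⟩
  have hMpfin : {i | Mp i}.Finite :=
    (hXfin j).subset fun i h => (key i).1.mpr (Or.inl h)
  have hsplit : {i | P i}.ncard = {i | Mp i}.ncard + {i | Qp i}.ncard := by
    rw [hsetEq]
    exact Set.ncard_union_eq hdisj hMpfin (hQfin j)
  -- part A : multiplicities in cM equal multiplicities in C'
  have hcof1 : ∀ i, ∃ k, cM k ≤ C' i :=
    cofinal_of_stable M hstM C' cM hC'0 hM0 hC'desc hMdesc hC'inf hMinf
  have hcof2 : ∀ i, ∃ k, C' k ≤ cM i :=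
    cofinal_of_stable M hstM cM C' hM0 hC'0 hMdesc hC'desc hMinf hC'inf
  have hacount := count_eq S hsimple cM C' (by rw [hM0, hC'0]) hMdesc hC'desc hMq hC'q j
    (hMfin j) hMpfin hcof1 hcof2
  show {i | P i}.ncard = {i | Nonempty (quotSub (cM i) (cM (i + 1)) ≃ₗ[R] S j)}.ncard
      + {i | Qp i}.ncard
  rw [hsplit, hacount]
end
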